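/- arXiv:2405.08791 — 10 statements merged into one kernel-verified Lean document; each statement's English description precedes it below -/
import Mathlib

section
/- Let d ≥ 2 be even and T_d := T_{1,d}. Then the image of T_d is exactly the half-plane {(x,y) ∈ ℝ² : x ≥ y}. Define, for x ≥ y, the maps T⁻¹_{±,d}(x,y) = (−2x + y ± (x−y)^{1/d}, 2x − y), where (x−y)^{1/d} denotes the nonnegative d-th root. Then T⁻¹_{+,d} is a bijection from {x ≥ y} onto {(x,y) : x ≥ −y} and T⁻¹_{−,d} is a bijection from {x ≥ y} onto {(x,y) : x ≤ −y}; moreover T_d(T⁻¹_{±,d}(x,y)) = (x,y) for all x ≥ y, T⁻¹_{+,d}(T_d(x,y)) = (x,y) whenever x ≥ −y, and T⁻¹_{−,d}(T_d(x,y)) = (x,y) whenever x ≤ −y. Finally, for every x₀ ∈ ℝ, T_d maps the line {(x, −x + x₀) : x ∈ ℝ} bijectively onto the line {(x, x − x₀^d) : x ∈ ℝ}. -/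
/-- The model map `T_{a,d}(x,y) = (y − a(x+y)^d, y − 2a(x+y)^d)`. -/
noncomputable def Tmap (a : ℝ) (d : ℕ) (p : ℝ × ℝ) : ℝ × ℝ :=
  (p.2 - a * (p.1 + p.2) ^ d, p.2 - 2 * a * (p.1 + p.2) ^ d)

/-- Inverse branch `T⁻¹_{+,d}` (nonnegative d-th root, via `rpow`). -/
noncomputable def TinvPlus (d : ℕ) (p : ℝ × ℝ) : ℝ × ℝ :=
  (-2 * p.1 + p.2 + (p.1 - p.2) ^ ((1 : ℝ) / d), 2 * p.1 - p.2)

/-- Inverse branch `T⁻¹_{−,d}` (nonnegative d-th root, via `rpow`). -/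
noncomputable def TinvMinus (d : ℕ) (p : ℝ × ℝ) : ℝ × ℝ :=
  (-2 * p.1 + p.2 - (p.1 - p.2) ^ ((1 : ℝ) / d), 2 * p.1 - p.2)

lemma rt_pow {d : ℕ} (hd : d ≠ 0) {t : ℝ} (ht : 0 ≤ t) :
    (t ^ ((1 : ℝ) / d)) ^ d = t := by
  rw [← Real.rpow_natCast (t ^ ((1:ℝ)/d)) d, ← Real.rpow_mul ht, one_div,
    inv_mul_cancel₀ (by exact_mod_cast hd), Real.rpow_one]

lemma pow_rt {d : ℕ} (hd : d ≠ 0) {s : ℝ} (hs : 0 ≤ s) :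
    (s ^ d) ^ ((1 : ℝ) / d) = s := by
  rw [← Real.rpow_natCast s d, ← Real.rpow_mul hs, mul_one_div,
    div_self (by exact_mod_cast hd), Real.rpow_one]

/-- for even `d`, the image of `T_d` is `{x ≥ y}`, the two inverse
branches are bijections onto `{x ≥ −y}` and `{x ≤ −y}` respectively, and `T_d`
maps each line `y = −x + x₀` bijectively onto the line `y = x − x₀^d`. -/
theorem stmt1 (d : ℕ) (hd : 2 ≤ d) (heven : Even d) :
    Set.range (Tmap 1 d) = {p : ℝ × ℝ | p.2 ≤ p.1} ∧
    Set.BijOn (TinvPlus d) {p : ℝ × ℝ | p.2 ≤ p.1} {p : ℝ × ℝ | -p.2 ≤ p.1} ∧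
    Set.BijOn (TinvMinus d) {p : ℝ × ℝ | p.2 ≤ p.1} {p : ℝ × ℝ | p.1 ≤ -p.2} ∧
    (∀ p : ℝ × ℝ, p.2 ≤ p.1 →
      Tmap 1 d (TinvPlus d p) = p ∧ Tmap 1 d (TinvMinus d p) = p) ∧
    (∀ p : ℝ × ℝ, -p.2 ≤ p.1 → TinvPlus d (Tmap 1 d p) = p) ∧
    (∀ p : ℝ × ℝ, p.1 ≤ -p.2 → TinvMinus d (Tmap 1 d p) = p) ∧
    (∀ x₀ : ℝ, Set.BijOn (Tmap 1 d)
      {p : ℝ × ℝ | p.2 = -p.1 + x₀} {p : ℝ × ℝ | p.2 = p.1 - x₀ ^ d}) := by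
  have hd0 : d ≠ 0 := by omega
  -- left inverse on the plus branch
  have h1 : ∀ p : ℝ × ℝ, p.2 ≤ p.1 → Tmap 1 d (TinvPlus d p) = p := by
    intro p hp
    have ht : (0:ℝ) ≤ p.1 - p.2 := sub_nonneg.mpr hp
    have hr := rt_pow hd0 ht
    simp only [Tmap, TinvPlus]
    have hsum : (-2 * p.1 + p.2 + (p.1 - p.2) ^ ((1:ℝ)/d)) + (2 * p.1 - p.2)
        = (p.1 - p.2) ^ ((1:ℝ)/d) := by ring
    rw [hsum, hr]
    exact Prod.ext (by ring) (by ring)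
  have h2 : ∀ p : ℝ × ℝ, p.2 ≤ p.1 → Tmap 1 d (TinvMinus d p) = p := by
    intro p hp
    have ht : (0:ℝ) ≤ p.1 - p.2 := sub_nonneg.mpr hp
    have hr := rt_pow hd0 ht
    simp only [Tmap, TinvMinus]
    have hsum : (-2 * p.1 + p.2 - (p.1 - p.2) ^ ((1:ℝ)/d)) + (2 * p.1 - p.2)
        = -((p.1 - p.2) ^ ((1:ℝ)/d)) := by ring
    rw [hsum, heven.neg_pow, hr]
    exact Prod.ext (by ring) (by ring)
  have h3 : ∀ p : ℝ × ℝ, -p.2 ≤ p.1 → TinvPlus d (Tmap 1 d p) = p := by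
    intro p hp
    have hs : (0:ℝ) ≤ p.1 + p.2 := by linarith
    simp only [Tmap, TinvPlus]
    have hdiff : (p.2 - 1 * (p.1 + p.2) ^ d) - (p.2 - 2 * 1 * (p.1 + p.2) ^ d)
        = (p.1 + p.2) ^ d := by ring
    rw [hdiff, pow_rt hd0 hs]
    exact Prod.ext (by ring) (by ring)
  have h4 : ∀ p : ℝ × ℝ, p.1 ≤ -p.2 → TinvMinus d (Tmap 1 d p) = p := by
    intro p hp
    have hs : (0:ℝ) ≤ -(p.1 + p.2) := by linarith
    simp only [Tmap, TinvMinus]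
    have hdiff : (p.2 - 1 * (p.1 + p.2) ^ d) - (p.2 - 2 * 1 * (p.1 + p.2) ^ d)
        = (-(p.1 + p.2)) ^ d := by rw [heven.neg_pow]; ring
    rw [hdiff, pow_rt hd0 hs]
    exact Prod.ext (by ring) (by ring)
  have hmem : ∀ p : ℝ × ℝ, (Tmap 1 d p).2 ≤ (Tmap 1 d p).1 := by
    intro p
    simp only [Tmap]
    nlinarith [heven.pow_nonneg (p.1 + p.2)]
  refine ⟨?_, ⟨?_, ?_, ?_⟩, ⟨?_, ?_, ?_⟩, fun p hp => ⟨h1 p hp, h2 p hp⟩, h3, h4, ?_⟩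
  · ext p
    constructor
    · rintro ⟨q, rfl⟩; exact hmem q
    · intro hp; exact ⟨TinvPlus d p, h1 p hp⟩
  · intro p hp
    have := Real.rpow_nonneg (sub_nonneg.mpr hp) ((1:ℝ)/d)
    simp only [TinvPlus, Set.mem_setOf_eq]
    linarith
  · intro p hp q hq h
    rw [← h1 p hp, ← h1 q hq, h]
  · intro q hq
    exact ⟨Tmap 1 d q, hmem q, h3 q hq⟩
  · intro p hp
    have := Real.rpow_nonneg (sub_nonneg.mpr hp) ((1:ℝ)/d)
    simp only [TinvMinus, Set.mem_setOf_eq]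
    linarith
  · intro p hp q hq h
    rw [← h2 p hp, ← h2 q hq, h]
  · intro q hq
    exact ⟨Tmap 1 d q, hmem q, h4 q hq⟩
  · intro x₀
    refine ⟨?_, ?_, ?_⟩
    · intro p hp
      simp only [Set.mem_setOf_eq] at hp ⊢
      simp only [Tmap]
      have hs : p.1 + p.2 = x₀ := by linarith
      rw [hs]; ring
    · intro p hp q hq h
      simp only [Set.mem_setOf_eq] at hp hq
      have hsp : p.1 + p.2 = x₀ := by linarith
      have hsq : q.1 + q.2 = x₀ := by linarith
      have h1' := congrArg Prod.fst h
      simp only [Tmap, hsp, hsq] at h1'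
      have h2' : p.2 = q.2 := by linarith
      exact Prod.ext (by linarith) h2'
    · intro q hq
      simp only [Set.mem_setOf_eq] at hq
      refine ⟨(x₀ - (q.1 + x₀ ^ d), q.1 + x₀ ^ d), by simp [Set.mem_setOf_eq], ?_⟩
      simp only [Tmap]
      have hs : (x₀ - (q.1 + x₀ ^ d)) + (q.1 + x₀ ^ d) = x₀ := by ring
      rw [hs]
      exact Prod.ext (by simp) (by simp; linarith)
end

section
/- Let d ≥ 3 be odd and T_d := T_{1,d}. Then T_d : ℝ² → ℝ² is a homeomorphism of ℝ² onto ℝ², with inverse T_d⁻¹(x,y) = (−2x + y + (x−y)^{1/d}, 2x − y), where t^{1/d} denotes the unique real d-th root of t. The inverse T_d⁻¹ is real analytic on ℝ² ∖ {x = y} and is not differentiable at any point of the diagonal {x = y}. Moreover, for every x₀ ∈ ℝ, T_d maps the line {(x, −x + x₀) : x ∈ ℝ} bijectively onto the line {(x, x − x₀^d) : x ∈ ℝ}. -/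
/-- The unique real d-th root of `t` (for odd `d`). -/
noncomputable def oddRoot (d : ℕ) (t : ℝ) : ℝ :=
  if 0 ≤ t then t ^ ((1 : ℝ) / d) else -((-t) ^ ((1 : ℝ) / d))

lemma pow_oddRoot (d : ℕ) (hd : d ≠ 0) (hodd : Odd d) (t : ℝ) : oddRoot d t ^ d = t := by
  have hd' : (d : ℝ) ≠ 0 := Nat.cast_ne_zero.mpr hd
  have key : ∀ s : ℝ, 0 ≤ s → (s ^ ((1:ℝ)/d)) ^ d = s := by
    intro s hs
    rw [← Real.rpow_natCast (s ^ ((1:ℝ)/d)) d, ← Real.rpow_mul hs, one_div,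
      inv_mul_cancel₀ hd', Real.rpow_one]
  rcases le_or_gt 0 t with ht | ht
  · rw [oddRoot, if_pos ht]; exact key t ht
  · rw [oddRoot, if_neg (not_le.mpr ht), hodd.neg_pow, key (-t) (by linarith), neg_neg]

lemma oddRoot_pow (d : ℕ) (hd : d ≠ 0) (hodd : Odd d) (t : ℝ) : oddRoot d (t ^ d) = t :=
  hodd.strictMono_pow.injective (pow_oddRoot d hd hodd (t ^ d))

lemma continuous_oddRoot (d : ℕ) (hd : d ≠ 0) : Continuous (oddRoot d) := by
  have hne : ((d : ℝ))⁻¹ ≠ 0 := inv_ne_zero (Nat.cast_ne_zero.mpr hd)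
  have h1 : Continuous fun t : ℝ => t ^ ((1:ℝ)/d) := by
    rw [continuous_iff_continuousAt]
    intro x
    exact Real.continuousAt_rpow_const x _ (.inr (by positivity))
  have h2 : Continuous fun t : ℝ => -((-t) ^ ((1:ℝ)/d)) := (h1.comp continuous_neg).neg
  unfold oddRoot
  apply Continuous.if_le h1 h2 continuous_const continuous_id
  intro x hx
  have hx' : x = 0 := by simpa using hx.symm
  subst hx'
  simp [one_div, Real.zero_rpow hne]

lemma analyticAt_rpow_const_of_pos {s : ℝ} (hs : 0 < s) (c : ℝ) :
    AnalyticAt ℝ (fun u : ℝ => u ^ c) s := by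
  have hz : AnalyticAt ℂ (fun z : ℂ => z ^ (c : ℂ)) (s : ℂ) :=
    (analyticAt_id).cpow analyticAt_const (by
      rw [Complex.mem_slitPlane_iff]
      left
      simpa using hs)
  have h1 : AnalyticAt ℝ (fun u : ℝ => ((u : ℂ) ^ (c : ℂ)).re) s :=
    (Complex.reCLM.analyticAt _).comp
      ((hz.restrictScalars).comp (Complex.ofRealCLM.analyticAt s))
  exact h1

lemma analyticAt_oddRoot (d : ℕ) {t : ℝ} (ht : t ≠ 0) : AnalyticAt ℝ (oddRoot d) t := by
  rcases ht.lt_or_gt with ht' | ht'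
  · -- t < 0
    have h1 : AnalyticAt ℝ (fun u : ℝ => -((-u) ^ ((1:ℝ)/d))) t := by
      have hneg : AnalyticAt ℝ (fun u : ℝ => -u) t := analyticAt_id.neg
      exact ((analyticAt_rpow_const_of_pos (by linarith) ((1:ℝ)/d)).comp hneg).neg
    apply h1.congr
    filter_upwards [eventually_lt_nhds ht'] with u hu
    rw [oddRoot, if_neg (not_le.mpr hu)]
  · -- 0 < t
    apply (analyticAt_rpow_const_of_pos ht' ((1:ℝ)/d)).congr
    filter_upwards [eventually_gt_nhds ht'] with u hu
    rw [oddRoot, if_pos hu.le]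

/-- The homeomorphism underlying `T_{1,d}` for odd `d ≥ 1`. -/
noncomputable def Thomeo (d : ℕ) (hd : d ≠ 0) (hodd : Odd d) : (ℝ × ℝ) ≃ₜ (ℝ × ℝ) where
  toFun := Tmap 1 d
  invFun p := (-2 * p.1 + p.2 + oddRoot d (p.1 - p.2), 2 * p.1 - p.2)
  left_inv p := by
    simp only [Tmap, one_mul]
    have h1 : (p.2 - (p.1 + p.2) ^ d) - (p.2 - 2 * 1 * (p.1 + p.2) ^ d) = (p.1 + p.2) ^ d := by
      ring
    rw [Prod.ext_iff]
    constructor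
    · show -2 * (p.2 - (p.1 + p.2) ^ d) + (p.2 - 2 * 1 * (p.1 + p.2) ^ d) +
        oddRoot d ((p.2 - (p.1 + p.2) ^ d) - (p.2 - 2 * 1 * (p.1 + p.2) ^ d)) = p.1
      rw [h1, oddRoot_pow d hd hodd]
      ring
    · show 2 * (p.2 - (p.1 + p.2) ^ d) - (p.2 - 2 * 1 * (p.1 + p.2) ^ d) = p.2
      ring
  right_inv p := by
    simp only [Tmap, one_mul]
    have hsum : (-2 * p.1 + p.2 + oddRoot d (p.1 - p.2)) + (2 * p.1 - p.2) =
        oddRoot d (p.1 - p.2) := by ring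
    rw [Prod.ext_iff]
    constructor
    · show (2 * p.1 - p.2) -
        ((-2 * p.1 + p.2 + oddRoot d (p.1 - p.2)) + (2 * p.1 - p.2)) ^ d = p.1
      rw [hsum, pow_oddRoot d hd hodd]; ring
    · show (2 * p.1 - p.2) -
        2 * 1 * ((-2 * p.1 + p.2 + oddRoot d (p.1 - p.2)) + (2 * p.1 - p.2)) ^ d = p.2
      rw [hsum, pow_oddRoot d hd hodd]; ring
  continuous_toFun := by unfold Tmap; fun_prop
  continuous_invFun := by
    apply Continuous.prodMk
    · exact ((continuous_const.mul continuous_fst).add continuous_snd).add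
        ((continuous_oddRoot d hd).comp (continuous_fst.sub continuous_snd))
    · exact (continuous_const.mul continuous_fst).sub continuous_snd

/-- for odd `d ≥ 3`, `T_d` is a homeomorphism of `ℝ²` with the given
inverse, the inverse is real analytic off the diagonal, not differentiable on the
diagonal, and `T_d` maps each line `y = −x + x₀` bijectively onto `y = x − x₀^d`. -/
theorem stmt2 (d : ℕ) (hd : 3 ≤ d) (hodd : Odd d) :
    ∃ h : (ℝ × ℝ) ≃ₜ (ℝ × ℝ),
      (⇑h = Tmap 1 d) ∧
      (∀ p : ℝ × ℝ,
        h.symm p = (-2 * p.1 + p.2 + oddRoot d (p.1 - p.2), 2 * p.1 - p.2)) ∧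
      (∀ p : ℝ × ℝ, p.1 ≠ p.2 → AnalyticAt ℝ (⇑h.symm) p) ∧
      (∀ x : ℝ, ¬ DifferentiableAt ℝ (⇑h.symm) (x, x)) ∧
      (∀ x₀ : ℝ, Set.BijOn (Tmap 1 d)
        {p : ℝ × ℝ | p.2 = -p.1 + x₀} {p : ℝ × ℝ | p.2 = p.1 - x₀ ^ d}) := by
  have hd0 : d ≠ 0 := by omega
  refine ⟨Thomeo d hd0 hodd, rfl, fun p => rfl, ?_, ?_, ?_⟩
  · -- analyticity off the diagonal
    intro p hp
    have hsub : p.1 - p.2 ≠ 0 := sub_ne_zero.mpr hp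
    have hsymm : ⇑(Thomeo d hd0 hodd).symm =
        fun p : ℝ × ℝ => (-2 * p.1 + p.2 + oddRoot d (p.1 - p.2), 2 * p.1 - p.2) := rfl
    rw [hsymm]
    apply AnalyticAt.prod
    · apply AnalyticAt.add
      · exact ((analyticAt_const.mul ((ContinuousLinearMap.fst ℝ ℝ ℝ).analyticAt p)).add
          ((ContinuousLinearMap.snd ℝ ℝ ℝ).analyticAt p))
      · have hinner : AnalyticAt ℝ (fun q : ℝ × ℝ => q.1 - q.2) p :=
          ((ContinuousLinearMap.fst ℝ ℝ ℝ).analyticAt p).sub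
            ((ContinuousLinearMap.snd ℝ ℝ ℝ).analyticAt p)
        exact AnalyticAt.comp (g := oddRoot d) (f := fun q : ℝ × ℝ => q.1 - q.2)
          (analyticAt_oddRoot d hsub) hinner
    · exact (analyticAt_const.mul ((ContinuousLinearMap.fst ℝ ℝ ℝ).analyticAt p)).sub
        ((ContinuousLinearMap.snd ℝ ℝ ℝ).analyticAt p)
  · -- nondifferentiability on the diagonal
    intro x hdiff
    set M : (ℝ × ℝ) →L[ℝ] (ℝ × ℝ) :=
      (ContinuousLinearMap.snd ℝ ℝ ℝ).prod (ContinuousLinearMap.snd ℝ ℝ ℝ) with hMdef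
    have hTq : Tmap 1 d (-x, x) = (x, x) := by
      simp [Tmap, zero_pow hd0]
    have hsum : HasFDerivAt (fun p : ℝ × ℝ => p.1 + p.2)
        ((ContinuousLinearMap.fst ℝ ℝ ℝ) + (ContinuousLinearMap.snd ℝ ℝ ℝ)) (-x, x) :=
      (hasFDerivAt_fst).add (hasFDerivAt_snd)
    have hpow : HasFDerivAt (fun p : ℝ × ℝ => (p.1 + p.2) ^ d)
        (0 : (ℝ × ℝ) →L[ℝ] ℝ) (-x, x) := by
      have hg := ((hsum.differentiableAt).pow (d - 1)).hasFDerivAt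
      have h := hsum.mul hg
      have hfun : (fun p : ℝ × ℝ => (p.1 + p.2) * (p.1 + p.2) ^ (d - 1)) =
          fun p : ℝ × ℝ => (p.1 + p.2) ^ d := by
        funext p
        rw [← pow_succ', Nat.sub_add_cancel (by omega : 1 ≤ d)]
      rw [show ((fun p : ℝ × ℝ => p.1 + p.2) * (fun p : ℝ × ℝ => p.1 + p.2) ^ (d - 1)) =
          fun p : ℝ × ℝ => (p.1 + p.2) ^ d from hfun] at h
      refine h.congr_fderiv ?_
      simp [zero_pow (show d - 1 ≠ 0 by omega)]
    have hM : HasFDerivAt (Tmap 1 d) M (-x, x) := by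
      have h1 : HasFDerivAt (fun p : ℝ × ℝ => p.2 - 1 * (p.1 + p.2) ^ d)
          (ContinuousLinearMap.snd ℝ ℝ ℝ) (-x, x) := by
        have := hasFDerivAt_snd.sub ((hpow.const_mul (1 : ℝ)))
        refine this.congr_fderiv ?_
        simp
      have h2 : HasFDerivAt (fun p : ℝ × ℝ => p.2 - 2 * 1 * (p.1 + p.2) ^ d)
          (ContinuousLinearMap.snd ℝ ℝ ℝ) (-x, x) := by
        have := hasFDerivAt_snd.sub ((hpow.const_mul (2 * 1 : ℝ)))
        refine this.congr_fderiv ?_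
        simp
      exact h1.prodMk h2
    have hL := hdiff.hasFDerivAt
    rw [← hTq] at hL
    have hcomp := hL.comp (-x, x) hM
    have heq : (⇑(Thomeo d hd0 hodd).symm ∘ Tmap 1 d) = id := by
      funext p
      exact (Thomeo d hd0 hodd).symm_apply_apply p
    rw [heq] at hcomp
    have huniq : (fderiv ℝ (⇑(Thomeo d hd0 hodd).symm) (Tmap 1 d (-x, x))).comp M =
        ContinuousLinearMap.id ℝ (ℝ × ℝ) :=
      hcomp.unique (hasFDerivAt_id _)
    have := congrArg (fun f : (ℝ × ℝ) →L[ℝ] (ℝ × ℝ) => (f ((1 : ℝ), (0 : ℝ))).1) huniq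
    simp [hMdef, Prod.mk_zero_zero] at this
  · -- lines
    intro x₀
    refine ⟨?_, ?_, ?_⟩
    · intro p hp
      have hp' : p.2 = -p.1 + x₀ := hp
      have hsum : p.1 + p.2 = x₀ := by linarith
      show (Tmap 1 d p).2 = (Tmap 1 d p).1 - x₀ ^ d
      simp only [Tmap, hsum]
      ring
    · have hinj : Function.Injective (Tmap 1 d) := (Thomeo d hd0 hodd).injective
      exact hinj.injOn
    · intro q hq
      have hq' : q.2 = q.1 - x₀ ^ d := hq
      refine ⟨(Thomeo d hd0 hodd).symm q, ?_, (Thomeo d hd0 hodd).apply_symm_apply q⟩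
      have hval : (Thomeo d hd0 hodd).symm q =
          (-2 * q.1 + q.2 + oddRoot d (q.1 - q.2), 2 * q.1 - q.2) := rfl
      have hsub : q.1 - q.2 = x₀ ^ d := by linarith
      show ((Thomeo d hd0 hodd).symm q).2 = -((Thomeo d hd0 hodd).symm q).1 + x₀
      rw [hval]
      simp only
      rw [hsub, oddRoot_pow d hd0 hodd]
      ring
end

section
/- Let d ≥ 2 be an integer and let φ(x) = Σ_{n≥2} α_n xⁿ be a formal power series over ℝ with vanishing constant and linear coefficients that satisfies, as an identity of formal power series, the invariance equation φ(x) − 2(x + φ(x))^d = φ( φ(x) − (x + φ(x))^d ). Then α_n = 0 for every n that is not of the form d + k(d−1) with k ≥ 0 an integer; moreover α_d = 2 and α_{2d−1} = 4d. -/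
open PowerSeries Finset

private lemma coeff_eq_of_dvd {f g : PowerSeries ℝ} {n : ℕ}
    (h : (X : PowerSeries ℝ) ^ (n + 1) ∣ f - g) :
    PowerSeries.coeff n f = PowerSeries.coeff n g := by
  have := PowerSeries.X_pow_dvd_iff.mp h n (Nat.lt_succ_self n)
  rw [map_sub] at this
  linarith

private lemma coeff_two_mul (f : PowerSeries ℝ) (n : ℕ) :
    PowerSeries.coeff n (2 * f) = 2 * PowerSeries.coeff n f := by
  rw [two_mul, map_add, two_mul]

/-- support condition: coefficients live on indices `≥ l` congruent to `c` mod `D`. -/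
private def GoodPS (D l c : ℕ) (f : PowerSeries ℝ) : Prop :=
  ∀ m, PowerSeries.coeff m f ≠ 0 → l ≤ m ∧ m ≡ c [MOD D]

private lemma GoodPS.mul {D l c l' c' : ℕ} {f g : PowerSeries ℝ}
    (hf : GoodPS D l c f) (hg : GoodPS D l' c' g) :
    GoodPS D (l + l') (c + c') (f * g) := by
  intro m hm
  rw [PowerSeries.coeff_mul] at hm
  obtain ⟨p, hp, hne⟩ := Finset.exists_ne_zero_of_sum_ne_zero hm
  rw [Finset.HasAntidiagonal.mem_antidiagonal] at hp
  have h1 := hf p.1 (left_ne_zero_of_mul hne)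
  have h2 := hg p.2 (right_ne_zero_of_mul hne)
  subst hp
  exact ⟨Nat.add_le_add h1.1 h2.1, Nat.ModEq.add h1.2 h2.2⟩

private lemma GoodPS.mono {D l c l' c' : ℕ} {f : PowerSeries ℝ}
    (hf : GoodPS D l c f) (hl : l' ≤ l) (hc : c ≡ c' [MOD D]) :
    GoodPS D l' c' f := by
  intro m hm
  obtain ⟨h1, h2⟩ := hf m hm
  exact ⟨le_trans hl h1, h2.trans hc⟩

private lemma GoodPS.pow {D l c : ℕ} {f : PowerSeries ℝ}
    (hf : GoodPS D l c f) (k : ℕ) : GoodPS D (k * l) (k * c) (f ^ k) := by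
  induction k with
  | zero =>
    intro m hm
    rw [pow_zero, PowerSeries.coeff_one] at hm
    simp only [ne_eq, ite_eq_right_iff, not_forall] at hm
    obtain ⟨rfl, -⟩ := hm
    exact ⟨by simp, by simp [Nat.ModEq]⟩
  | succ k ih =>
    rw [pow_succ]
    have := ih.mul hf
    have e1 : k * l + l = (k + 1) * l := by ring
    have e2 : k * c + c = (k + 1) * c := by ring
    rwa [e1, e2] at this

private lemma GoodPS.sub {D l c : ℕ} {f g : PowerSeries ℝ}
    (hf : GoodPS D l c f) (hg : GoodPS D l c g) : GoodPS D l c (f - g) := by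
  intro m hm
  rw [map_sub] at hm
  by_cases h : PowerSeries.coeff m f = 0
  · refine hg m ?_
    intro h2
    rw [h, h2, sub_zero] at hm
    exact hm rfl
  · exact hf m h

private lemma GoodPS.add {D l c : ℕ} {f g : PowerSeries ℝ}
    (hf : GoodPS D l c f) (hg : GoodPS D l c g) : GoodPS D l c (f + g) := by
  intro m hm
  rw [map_add] at hm
  by_cases h : PowerSeries.coeff m f = 0
  · refine hg m ?_
    intro h2
    rw [h, h2, add_zero] at hm
    exact hm rfl
  · exact hf m h

private lemma goodPS_X {D : ℕ} : GoodPS D 1 1 (X : PowerSeries ℝ) := by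
  intro m hm
  rw [PowerSeries.coeff_X] at hm
  simp only [ne_eq, ite_eq_right_iff, not_forall] at hm
  obtain ⟨rfl, -⟩ := hm
  exact ⟨le_refl _, Nat.ModEq.refl _⟩

private lemma aux_pow_diff (a b : PowerSeries ℝ) (k n : ℕ) (hk : 2 ≤ k)
    (ha : (X : PowerSeries ℝ) ∣ a) (hb : (X : PowerSeries ℝ) ∣ b)
    (hab : (X : PowerSeries ℝ) ^ n ∣ a - b) :
    (X : PowerSeries ℝ) ^ (n + 1) ∣ a ^ k - b ^ k := by
  rw [← geom_sum₂_mul a b k, pow_succ']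
  refine mul_dvd_mul ?_ hab
  refine Finset.dvd_sum ?_
  intro i hi
  rw [Finset.mem_range] at hi
  rcases Nat.eq_zero_or_pos i with rfl | hipos
  · exact dvd_mul_of_dvd_right (dvd_pow hb (by omega)) _
  · exact dvd_mul_of_dvd_left (dvd_pow ha (by omega)) _

/-- Composition `f ∘ g` of formal power series (intended for `g` with zero
constant coefficient, in which case `coeff n (g ^ k) = 0` for `k > n` and the
finite sum below gives the usual substitution of `g` into `f`). -/
noncomputable def psComp (f g : PowerSeries ℝ) : PowerSeries ℝ :=
  PowerSeries.mk fun n =>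
    ∑ k ∈ Finset.range (n + 1), PowerSeries.coeff k f * PowerSeries.coeff n (g ^ k)

/-- structure of the Taylor coefficients of the stable manifold. -/
theorem stmt3 (d : ℕ) (hd : 2 ≤ d) (φ : PowerSeries ℝ)
    (h0 : PowerSeries.coeff 0 φ = 0) (h1 : PowerSeries.coeff 1 φ = 0)
    (hinv : φ - 2 * (PowerSeries.X + φ) ^ d =
      psComp φ (φ - (PowerSeries.X + φ) ^ d)) :
    (∀ n : ℕ, (¬ ∃ k : ℕ, n = d + k * (d - 1)) → PowerSeries.coeff n φ = 0) ∧
    PowerSeries.coeff d φ = 2 ∧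
    PowerSeries.coeff (2 * d - 1) φ = 4 * d := by
  set D := d - 1 with hDdef
  have hdD : d = D + 1 := by omega
  have S_mod : ∀ k : ℕ, d + k * D ≡ 1 [MOD D] := by
    intro k
    have e : d + k * D - 1 = D * (k + 1) := by
      rw [Nat.mul_add, Nat.mul_one, Nat.mul_comm D k]; omega
    exact ((Nat.modEq_iff_dvd' (by omega)).mpr ⟨k + 1, e⟩).symm
  have memS : ∀ m : ℕ, 2 ≤ m → m ≡ 1 [MOD D] → ∃ k, m = d + k * D := by
    intro m h2 hmod
    obtain ⟨j, hj⟩ := (Nat.modEq_iff_dvd' (by omega : 1 ≤ m)).mp hmod.symm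
    have hj1 : 1 ≤ j := by
      rcases Nat.eq_zero_or_pos j with rfl | h
      · simp at hj; omega
      · exact h
    obtain ⟨i, rfl⟩ : ∃ i, j = i + 1 := ⟨j - 1, by omega⟩
    refine ⟨i, ?_⟩
    rw [Nat.mul_add, Nat.mul_one, Nat.mul_comm D i] at hj
    omega
  have heq : ∀ n : ℕ, PowerSeries.coeff n φ
      - 2 * PowerSeries.coeff n ((X + φ) ^ d) =
      ∑ k ∈ Finset.range (n + 1),
        PowerSeries.coeff k φ * PowerSeries.coeff n ((φ - (X + φ) ^ d) ^ k) := by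
    intro n
    have h := congrArg (PowerSeries.coeff n) hinv
    rwa [map_sub, coeff_two_mul, psComp, PowerSeries.coeff_mk] at h
  have hXφ : (X : PowerSeries ℝ) ∣ φ := PowerSeries.X_dvd_iff.mpr
    (by rw [← PowerSeries.coeff_zero_eq_constantCoeff_apply]; exact h0)
  have hXψ : (X : PowerSeries ℝ) ∣ X + φ := dvd_add dvd_rfl hXφ
  have hX2φ : (X : PowerSeries ℝ) ^ 2 ∣ φ := PowerSeries.X_pow_dvd_iff.mpr (by
    intro m hm; interval_cases m; exacts [h0, h1])
  have hXdψd : (X : PowerSeries ℝ) ^ d ∣ (X + φ) ^ d := pow_dvd_pow_of_dvd hXψ d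
  have hX2g : (X : PowerSeries ℝ) ^ 2 ∣ φ - (X + φ) ^ d :=
    dvd_sub hX2φ (dvd_trans (pow_dvd_pow X hd) hXdψd)
  have hXg : (X : PowerSeries ℝ) ∣ φ - (X + φ) ^ d :=
    dvd_trans (dvd_pow_self X two_ne_zero) hX2g
  -- Part 1
  have part1 : ∀ n : ℕ, (¬ ∃ k : ℕ, n = d + k * D) → PowerSeries.coeff n φ = 0 := by
    intro n
    induction n using Nat.strong_induction_on with
    | _ n IH =>
    intro hn
    set τ : PowerSeries ℝ := ((PowerSeries.trunc n φ : Polynomial ℝ) : PowerSeries ℝ) with hτdef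
    have hτ : ∀ m, PowerSeries.coeff m τ
        = if m < n then PowerSeries.coeff m φ else 0 := by
      intro m
      rw [hτdef, Polynomial.coeff_coe, PowerSeries.coeff_trunc]
    have hτgood : GoodPS D 2 1 τ := by
      intro m hm
      rw [hτ] at hm
      by_cases hmn : m < n
      · rw [if_pos hmn] at hm
        by_cases hSm : ∃ k, m = d + k * D
        · obtain ⟨k, rfl⟩ := hSm
          exact ⟨by omega, S_mod k⟩
        · exact absurd (IH m hmn hSm) hm
      · rw [if_neg hmn] at hm; exact absurd rfl hm
    have hXτ : (X : PowerSeries ℝ) ∣ τ := PowerSeries.X_dvd_iff.mpr (by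
      rw [← PowerSeries.coeff_zero_eq_constantCoeff_apply, hτ]
      split
      · exact h0
      · rfl)
    have hψ'good : GoodPS D 1 1 ((X : PowerSeries ℝ) + τ) :=
      goodPS_X.add (hτgood.mono (by omega) (Nat.ModEq.refl _))
    have hXψ' : (X : PowerSeries ℝ) ∣ X + τ := dvd_add dvd_rfl hXτ
    have hψ'dgood : GoodPS D d 1 (((X : PowerSeries ℝ) + τ) ^ d) := by
      have h2 := hψ'good.pow d
      simp only [Nat.mul_one] at h2
      exact h2.mono (le_refl _) (by rw [hdD]; exact Nat.add_modEq_left)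
    have hg'good : GoodPS D 2 1 (τ - (X + τ) ^ d) :=
      hτgood.sub (hψ'dgood.mono (by omega) (Nat.ModEq.refl _))
    have hXg' : (X : PowerSeries ℝ) ∣ τ - (X + τ) ^ d :=
      dvd_sub hXτ (dvd_trans (dvd_pow_self X (by omega : d ≠ 0)) (pow_dvd_pow_of_dvd hXψ' d))
    have hdiff : (X : PowerSeries ℝ) ^ n ∣ φ - τ := PowerSeries.X_pow_dvd_iff.mpr (by
      intro m hm
      rw [map_sub, hτ, if_pos hm, sub_self])
    have hψdiff : (X : PowerSeries ℝ) ^ n ∣ (X + φ) - (X + τ) := by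
      have e : (X : PowerSeries ℝ) + φ - (X + τ) = φ - τ := by ring
      rw [e]; exact hdiff
    have hψpow : (X : PowerSeries ℝ) ^ (n + 1) ∣ (X + φ) ^ d - (X + τ) ^ d :=
      aux_pow_diff _ _ d n hd hXψ hXψ' hψdiff
    have hcψ : PowerSeries.coeff n ((X + φ) ^ d) = PowerSeries.coeff n ((X + τ) ^ d) :=
      coeff_eq_of_dvd hψpow
    have hgdiff : (X : PowerSeries ℝ) ^ n ∣ (φ - (X + φ) ^ d) - (τ - (X + τ) ^ d) := by
      have e : (φ - (X + φ) ^ d) - (τ - (X + τ) ^ d)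
          = (φ - τ) - ((X + φ) ^ d - (X + τ) ^ d) := by ring
      rw [e]
      exact dvd_sub hdiff (dvd_trans (pow_dvd_pow X (Nat.le_succ n)) hψpow)
    have hcψ0 : PowerSeries.coeff n ((X + τ) ^ d) = 0 := by
      by_contra hne
      obtain ⟨hl, hc⟩ := hψ'dgood n hne
      exact hn (memS n (by omega) hc)
    have hterms : ∀ k ∈ Finset.range (n + 1),
        PowerSeries.coeff k φ * PowerSeries.coeff n ((φ - (X + φ) ^ d) ^ k) = 0 := by
      intro k _
      match k with
      | 0 => rw [h0, zero_mul]
      | 1 => rw [h1, zero_mul]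
      | (j + 2) =>
        have hck : PowerSeries.coeff n ((φ - (X + φ) ^ d) ^ (j + 2)) =
            PowerSeries.coeff n ((τ - (X + τ) ^ d) ^ (j + 2)) :=
          coeff_eq_of_dvd (aux_pow_diff _ _ (j + 2) n (by omega) hXg hXg' hgdiff)
        rw [hck]
        by_cases hz : PowerSeries.coeff n ((τ - (X + τ) ^ d) ^ (j + 2)) = 0
        · rw [hz, mul_zero]
        · obtain ⟨hl, hc⟩ := hg'good.pow (j + 2) n hz
          simp only [Nat.mul_one] at hc
          by_cases hSk : ∃ i, j + 2 = d + i * D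
          · obtain ⟨i, hi⟩ := hSk
            have h1' : n ≡ 1 [MOD D] := hc.trans (by rw [hi]; exact S_mod i)
            exact absurd (memS n (by omega) h1') hn
          · rw [IH (j + 2) (by omega) hSk, zero_mul]
    have h := heq n
    rw [Finset.sum_eq_zero hterms, hcψ, hcψ0] at h
    linarith
  -- Part 2
  have hXdφ : (X : PowerSeries ℝ) ^ d ∣ φ := PowerSeries.X_pow_dvd_iff.mpr (by
    intro m hm
    refine part1 m ?_
    rintro ⟨k, rfl⟩
    omega)
  have hXdg : (X : PowerSeries ℝ) ^ d ∣ φ - (X + φ) ^ d := dvd_sub hXdφ hXdψd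
  have hgk0 : ∀ n, n < 2 * d → ∀ j : ℕ,
      PowerSeries.coeff n ((φ - (X + φ) ^ d) ^ (j + 2)) = 0 := by
    intro n hn j
    have hdvd : (X : PowerSeries ℝ) ^ (d * (j + 2)) ∣ (φ - (X + φ) ^ d) ^ (j + 2) := by
      rw [pow_mul]; exact pow_dvd_pow_of_dvd hXdg (j + 2)
    refine PowerSeries.X_pow_dvd_iff.mp hdvd n ?_
    have : d * 2 ≤ d * (j + 2) := Nat.mul_le_mul_left d (by omega)
    omega
  have hcd : PowerSeries.coeff d ((X + φ) ^ d) = 1 := by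
    rw [add_pow, map_sum]
    rw [Finset.sum_eq_single_of_mem d (Finset.self_mem_range_succ d)]
    · simp [Nat.choose_self, PowerSeries.coeff_X_pow]
    · intro k hk hkd
      rw [Finset.mem_range] at hk
      have hkd' : k < d := by omega
      have hdvd : (X : PowerSeries ℝ) ^ (d + 1) ∣ X ^ k * φ ^ (d - k) * (d.choose k : PowerSeries ℝ) := by
        refine dvd_mul_of_dvd_left ?_ _
        have hdd : (X : PowerSeries ℝ) ^ (k + 2 * (d - k)) ∣ X ^ k * φ ^ (d - k) := by
          rw [pow_add]
          exact mul_dvd_mul dvd_rfl (by rw [pow_mul]; exact pow_dvd_pow_of_dvd hX2φ (d - k))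
        exact dvd_trans (pow_dvd_pow X (by omega)) hdd
      exact PowerSeries.X_pow_dvd_iff.mp hdvd d (Nat.lt_succ_self d)
  have had : PowerSeries.coeff d φ = 2 := by
    have h := heq d
    have hterms : ∀ k ∈ Finset.range (d + 1),
        PowerSeries.coeff k φ * PowerSeries.coeff d ((φ - (X + φ) ^ d) ^ k) = 0 := by
      intro k _
      match k with
      | 0 => rw [h0, zero_mul]
      | 1 => rw [h1, zero_mul]
      | (j + 2) => rw [hgk0 d (by omega) j, mul_zero]
    rw [Finset.sum_eq_zero hterms, hcd] at h
    linarith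
  refine ⟨part1, had, ?_⟩
  -- Part 3
  have hσ : (X : PowerSeries ℝ) ^ (2 * d - 1) ∣ φ - (PowerSeries.C (R := ℝ)) 2 * X ^ d := by
    refine PowerSeries.X_pow_dvd_iff.mpr ?_
    intro m hm
    rw [map_sub, PowerSeries.coeff_C_mul, PowerSeries.coeff_X_pow]
    by_cases hmd : m = d
    · subst hmd; rw [if_pos rfl, had]; norm_num
    · rw [if_neg hmd, mul_zero, sub_zero]
      refine part1 m ?_
      rintro ⟨k, rfl⟩
      rcases Nat.eq_zero_or_pos k with rfl | hk
      · simp at hmd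
      · have : 1 * D ≤ k * D := Nat.mul_le_mul_right D hk
        omega
  set ρ : PowerSeries ℝ := X + (PowerSeries.C (R := ℝ)) 2 * X ^ d with hρdef
  have hXρ : (X : PowerSeries ℝ) ∣ ρ :=
    dvd_add dvd_rfl (dvd_mul_of_dvd_right (dvd_pow_self X (by omega)) _)
  have hψρ : (X : PowerSeries ℝ) ^ (2 * d - 1) ∣ (X + φ) - ρ := by
    have e : (X : PowerSeries ℝ) + φ - ρ = φ - (PowerSeries.C (R := ℝ)) 2 * X ^ d := by
      rw [hρdef]; ring
    rw [e]; exact hσ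
  have hcρ : PowerSeries.coeff (2 * d - 1) ((X + φ) ^ d)
      = PowerSeries.coeff (2 * d - 1) (ρ ^ d) :=
    coeff_eq_of_dvd (aux_pow_diff _ _ d (2 * d - 1) hd hXψ hXρ hψρ)
  have hch : d.choose (d - 1) = d := by
    have h2 := Nat.choose_symm (show d - 1 ≤ d by omega)
    rw [show d - (d - 1) = 1 by omega] at h2
    rw [← h2, Nat.choose_one_right]
  have hcρval : PowerSeries.coeff (2 * d - 1) (ρ ^ d) = 2 * (d : ℝ) := by
    rw [hρdef, add_pow, map_sum]
    rw [Finset.sum_eq_single_of_mem (d - 1) (by rw [Finset.mem_range]; omega)]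
    · rw [show d - (d - 1) = 1 by omega, pow_one]
      have e3 : (X : PowerSeries ℝ) ^ (d - 1) * X ^ d = X ^ (2 * d - 1) := by
        rw [← pow_add]; congr 1; omega
      have e2 : (X : PowerSeries ℝ) ^ (d - 1) * ((PowerSeries.C (R := ℝ)) 2 * X ^ d)
          * (d.choose (d - 1) : PowerSeries ℝ)
          = (PowerSeries.C (R := ℝ)) (2 * (d : ℝ)) * X ^ (2 * d - 1) := by
        rw [hch, ← map_natCast ((PowerSeries.C (R := ℝ))) d, ← e3]
        rw [map_mul]
        ring
      rw [e2, PowerSeries.coeff_C_mul_X_pow, if_pos rfl]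
    · intro k hk hkd
      rw [Finset.mem_range] at hk
      by_cases hkdd : k = d
      · rw [hkdd]
        simp [PowerSeries.coeff_X_pow, Nat.choose_self, show ¬(2 * d - 1 = d) by omega]
      · have hk2 : d - k ≥ 2 := by omega
        have hdvd : (X : PowerSeries ℝ) ^ (2 * d)
            ∣ X ^ k * ((PowerSeries.C (R := ℝ)) 2 * X ^ d) ^ (d - k) * (d.choose k : PowerSeries ℝ) := by
          refine dvd_mul_of_dvd_left ?_ _
          have hdd : (X : PowerSeries ℝ) ^ (k + d * (d - k))
              ∣ X ^ k * ((PowerSeries.C (R := ℝ)) 2 * X ^ d) ^ (d - k) := by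
            rw [pow_add]
            refine mul_dvd_mul dvd_rfl ?_
            rw [pow_mul]
            exact pow_dvd_pow_of_dvd (dvd_mul_left _ _) (d - k)
          refine dvd_trans (pow_dvd_pow X ?_) hdd
          have : d * 2 ≤ d * (d - k) := Nat.mul_le_mul_left d hk2
          omega
        refine PowerSeries.X_pow_dvd_iff.mp hdvd _ (by omega)
  have h := heq (2 * d - 1)
  have hterms : ∀ k ∈ Finset.range (2 * d - 1 + 1),
      PowerSeries.coeff k φ * PowerSeries.coeff (2 * d - 1) ((φ - (X + φ) ^ d) ^ k) = 0 := by
    intro k _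
    match k with
    | 0 => rw [h0, zero_mul]
    | 1 => rw [h1, zero_mul]
    | (j + 2) => rw [hgk0 (2 * d - 1) (by omega) j, mul_zero]
  rw [Finset.sum_eq_zero hterms, hcρ, hcρval] at h
  linarith
end

section
/- Let d ≥ 2 be even and let φ(x) = Σ_{n≥2} α_n xⁿ be a formal power series over ℝ with vanishing constant and linear coefficients satisfying the invariance equation φ(x) − 2(x + φ(x))^d = φ( φ(x) − (x + φ(x))^d ) as formal power series. Then α_n ≥ 0 for every n ≥ 2. -/
open PowerSeries

private lemma coord_lt {k n : ℕ} (hk : 2 ≤ k) {l : ℕ →₀ ℕ}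
    (hsum : ∑ j ∈ Finset.range k, l j = n)
    (hpos : ∀ j ∈ Finset.range k, 1 ≤ l j) {i : ℕ} (hi : i ∈ Finset.range k) :
    l i < n := by
  have hjm : (if i = 0 then 1 else 0) ∈ Finset.range k := by
    rw [Finset.mem_range]; split_ifs <;> omega
  have hji : (if i = 0 then 1 else 0) ≠ i := by split_ifs with h <;> omega
  have h1 : l i + ∑ x ∈ (Finset.range k).erase i, l x = n := by
    rw [Finset.add_sum_erase _ _ hi, hsum]
  have h2 : l (if i = 0 then 1 else 0) ≤ ∑ x ∈ (Finset.range k).erase i, l x :=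
    Finset.single_le_sum (fun _ _ => Nat.zero_le _) (Finset.mem_erase.mpr ⟨hji, hjm⟩)
  have := hpos _ hjm
  omega

private lemma pow_coeff_nonneg (u : PowerSeries ℝ) (hu0 : PowerSeries.coeff 0 u = 0)
    {n k : ℕ} (hk : 2 ≤ k) (h : ∀ m, m < n → 0 ≤ PowerSeries.coeff m u) :
    0 ≤ PowerSeries.coeff n (u ^ k) := by
  rw [PowerSeries.coeff_pow]
  apply Finset.sum_nonneg
  intro l hl
  rw [Finset.mem_finsuppAntidiag] at hl
  by_cases hz : ∀ j ∈ Finset.range k, 1 ≤ l j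
  · exact Finset.prod_nonneg fun i hi => h _ (coord_lt hk hl.1 hz hi)
  · push_neg at hz
    obtain ⟨i, hi, hli⟩ := hz
    have h0 : l i = 0 := by omega
    refine le_of_eq (Finset.prod_eq_zero hi ?_).symm
    rw [h0, hu0]

private lemma pow_coeff_zero_of_lt (u : PowerSeries ℝ) (hu0 : PowerSeries.coeff 0 u = 0)
    {n k : ℕ} (hnk : n < k) : PowerSeries.coeff n (u ^ k) = 0 := by
  rw [PowerSeries.coeff_pow]
  apply Finset.sum_eq_zero
  intro l hl
  rw [Finset.mem_finsuppAntidiag] at hl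
  by_cases hz : ∀ j ∈ Finset.range k, 1 ≤ l j
  · exfalso
    have hle : k ≤ ∑ j ∈ Finset.range k, l j := by
      calc k = ∑ _j ∈ Finset.range k, 1 := by simp
      _ ≤ _ := Finset.sum_le_sum hz
    have hsum : ∑ j ∈ Finset.range k, l j = n := hl.1
    omega
  · push_neg at hz
    obtain ⟨i, hi, hli⟩ := hz
    have h0 : l i = 0 := by omega
    refine Finset.prod_eq_zero hi ?_
    rw [h0, hu0]

private lemma pow_coeff_zero_of_lt2 (u : PowerSeries ℝ) (hu0 : PowerSeries.coeff 0 u = 0)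
    (hu1 : PowerSeries.coeff 1 u = 0) {n k : ℕ} (hnk : n < 2 * k) :
    PowerSeries.coeff n (u ^ k) = 0 := by
  rw [PowerSeries.coeff_pow]
  apply Finset.sum_eq_zero
  intro l hl
  rw [Finset.mem_finsuppAntidiag] at hl
  by_cases hz : ∀ j ∈ Finset.range k, 2 ≤ l j
  · exfalso
    have hle : 2 * k ≤ ∑ j ∈ Finset.range k, l j := by
      calc 2 * k = ∑ _j ∈ Finset.range k, 2 := by simp [mul_comm]
      _ ≤ _ := Finset.sum_le_sum hz
    have hsum : ∑ j ∈ Finset.range k, l j = n := hl.1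
    omega
  · push_neg at hz
    obtain ⟨i, hi, hli⟩ := hz
    refine Finset.prod_eq_zero hi ?_
    interval_cases h : l i
    · rw [hu0]
    · rw [hu1]

/-- for even `d`, all coefficients of the stable manifold series
are nonnegative. -/
theorem stmt5 (d : ℕ) (hd : 2 ≤ d) (heven : Even d) (φ : PowerSeries ℝ)
    (h0 : PowerSeries.coeff 0 φ = 0) (h1 : PowerSeries.coeff 1 φ = 0)
    (hinv : φ - 2 * (PowerSeries.X + φ) ^ d =
      psComp φ (φ - (PowerSeries.X + φ) ^ d)) :
    ∀ n : ℕ, 2 ≤ n → 0 ≤ PowerSeries.coeff n φ := by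
  set g := φ - (PowerSeries.X + φ) ^ d with hgdef
  have hψ0 : PowerSeries.coeff 0 (PowerSeries.X + φ) = 0 := by
    rw [map_add, h0, PowerSeries.coeff_X]; norm_num
  have hg0 : PowerSeries.coeff 0 g = 0 := by
    rw [hgdef, map_sub, h0, pow_coeff_zero_of_lt _ hψ0 (by omega : 0 < d), sub_zero]
  have hg1 : PowerSeries.coeff 1 g = 0 := by
    rw [hgdef, map_sub, h1, pow_coeff_zero_of_lt _ hψ0 (by omega : 1 < d), sub_zero]
  have main : ∀ n : ℕ, 0 ≤ PowerSeries.coeff n φ ∧ 0 ≤ PowerSeries.coeff n g := by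
    intro n
    induction n using Nat.strong_induction_on with
    | _ n IH =>
      rcases Nat.lt_or_ge n 2 with h2 | h2
      · interval_cases n
        · exact ⟨le_of_eq h0.symm, le_of_eq hg0.symm⟩
        · exact ⟨le_of_eq h1.symm, le_of_eq hg1.symm⟩
      · have hψ : ∀ m, m < n → 0 ≤ PowerSeries.coeff m (PowerSeries.X + φ) := by
          intro m hm
          have := (IH m hm).1
          rw [map_add, PowerSeries.coeff_X]
          split_ifs <;> linarith
        have hc : 0 ≤ PowerSeries.coeff n ((PowerSeries.X + φ) ^ d) :=
          pow_coeff_nonneg _ hψ0 hd hψ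
        have hgm : ∀ m, m < n → 0 ≤ PowerSeries.coeff m g := fun m hm => (IH m hm).2
        have hS : 0 ≤ ∑ k ∈ Finset.range (n + 1),
            PowerSeries.coeff k φ * PowerSeries.coeff n (g ^ k) := by
          apply Finset.sum_nonneg
          intro k hk
          rw [Finset.mem_range] at hk
          rcases k with _ | _ | k
          · rw [h0, zero_mul]
          · rw [h1, zero_mul]
          · by_cases hkn : k + 2 = n
            · rw [pow_coeff_zero_of_lt2 g hg0 hg1 (by omega : n < 2 * (k + 2)), mul_zero]
            · exact mul_nonneg (IH _ (by omega)).1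
                (pow_coeff_nonneg g hg0 (by omega) hgm)
        have E := congrArg (PowerSeries.coeff n) hinv
        rw [map_sub] at E
        have E2 : PowerSeries.coeff n (2 * (PowerSeries.X + φ) ^ d) =
            2 * PowerSeries.coeff n ((PowerSeries.X + φ) ^ d) := by
          rw [two_mul, map_add]; ring
        rw [E2] at E
        have E3 : PowerSeries.coeff n (psComp φ g) = ∑ k ∈ Finset.range (n + 1),
            PowerSeries.coeff k φ * PowerSeries.coeff n (g ^ k) := by
          simp [psComp, PowerSeries.coeff_mk]
        rw [E3] at E
        have hgn : PowerSeries.coeff n g =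
            PowerSeries.coeff n φ - PowerSeries.coeff n ((PowerSeries.X + φ) ^ d) := by
          rw [hgdef, map_sub]
        constructor <;> linarith
  intro n _
  exact (main n).1
end

section
/- Let d ≥ 2 be even, T_d := T_{1,d}, and for (x₀,y₀) ∈ ℝ² write (x_k, y_k) = T_d^k(x₀,y₀). Then for every k ≥ 1 one has y_k ≤ x_k; moreover x_{k+1} ≤ y_k ≤ x_k for all k ≥ 1 and y_{k+1} ≤ y_k for all k ≥ 0, so the sequences {x_k}_{k≥1} and {y_k}_{k≥1} are monotonically decreasing. Furthermore, for k ≥ 1, if x_k > −y_k then x_{k+1} < x_k and y_{k+1} < y_k. -/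
/-- monotonicity of the orbit coordinates for even `d`. -/
theorem stmt6 (d : ℕ) (hd : 2 ≤ d) (heven : Even d) (p : ℝ × ℝ) :
    (∀ k : ℕ, 1 ≤ k → ((Tmap 1 d)^[k] p).2 ≤ ((Tmap 1 d)^[k] p).1) ∧
    (∀ k : ℕ, 1 ≤ k →
      ((Tmap 1 d)^[k + 1] p).1 ≤ ((Tmap 1 d)^[k] p).2 ∧
      ((Tmap 1 d)^[k] p).2 ≤ ((Tmap 1 d)^[k] p).1) ∧
    (∀ k : ℕ, ((Tmap 1 d)^[k + 1] p).2 ≤ ((Tmap 1 d)^[k] p).2) ∧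
    (∀ k : ℕ, 1 ≤ k → -((Tmap 1 d)^[k] p).2 < ((Tmap 1 d)^[k] p).1 →
      ((Tmap 1 d)^[k + 1] p).1 < ((Tmap 1 d)^[k] p).1 ∧
      ((Tmap 1 d)^[k + 1] p).2 < ((Tmap 1 d)^[k] p).2) := by
  have hs : ∀ q : ℝ × ℝ, 0 ≤ (q.1 + q.2) ^ d := fun q => heven.pow_nonneg _
  -- After one application, second coordinate ≤ first
  have h1 : ∀ q : ℝ × ℝ, (Tmap 1 d q).2 ≤ (Tmap 1 d q).1 := by
    intro q
    simp only [Tmap]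
    nlinarith [hs q]
  have hiter : ∀ k : ℕ, 1 ≤ k → ((Tmap 1 d)^[k] p).2 ≤ ((Tmap 1 d)^[k] p).1 := by
    intro k hk
    obtain ⟨m, rfl⟩ := Nat.exists_eq_add_of_le hk
    rw [add_comm, Function.iterate_succ_apply']
    exact h1 _
  refine ⟨hiter, ?_, ?_, ?_⟩
  · intro k hk
    refine ⟨?_, hiter k hk⟩
    rw [Function.iterate_succ_apply']
    set q := (Tmap 1 d)^[k] p
    simp only [Tmap]
    nlinarith [hs q]
  · intro k
    rw [Function.iterate_succ_apply']
    set q := (Tmap 1 d)^[k] p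
    simp only [Tmap]
    nlinarith [hs q]
  · intro k hk hpos
    set q := (Tmap 1 d)^[k] p with hq
    have hsum : 0 < q.1 + q.2 := by linarith
    have hspos : 0 < (q.1 + q.2) ^ d := pow_pos hsum d
    have hyx : q.2 ≤ q.1 := hiter k hk
    constructor <;> (rw [Function.iterate_succ_apply', ← hq]; simp only [Tmap]; nlinarith)
end

section
/- Let d ≥ 2 be even, T_d := T_{1,d}, and set R_d = (1 − 1/d)·(2d)^{−1/(d−1)}. Then the basin of attraction 𝒜_d(0) of the origin satisfies 𝒜_d(0) ⊆ (−5R_d, R_d) × (0, 2R_d) ∪ {(0,0)}; in particular, 𝒜_d(0) is a bounded set. -/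
/-- The basin of attraction of the origin for `T_{a,d}`. -/
noncomputable def basin (a : ℝ) (d : ℕ) : Set (ℝ × ℝ) :=
  {p : ℝ × ℝ | Filter.Tendsto (fun n => (Tmap a d)^[n] p) Filter.atTop (nhds (0, 0))}

/-- The constant `R_d = (1 − 1/d)·(2d)^{−1/(d−1)}`. -/
noncomputable def Rd (d : ℕ) : ℝ :=
  (1 - 1 / (d : ℝ)) * ((2 * d : ℝ)) ^ (-(1 : ℝ) / ((d : ℝ) - 1))

lemma snd_nonneg_aux (d : ℕ) (heven : Even d) (p : ℝ × ℝ)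
    (hp : p ∈ basin 1 d) (n : ℕ) : 0 ≤ ((Tmap 1 d)^[n] p).2 := by
  have hanti : Antitone fun n => ((Tmap 1 d)^[n] p).2 := by
    apply antitone_nat_of_succ_le
    intro m
    have h : (Tmap 1 d)^[m+1] p = Tmap 1 d ((Tmap 1 d)^[m] p) :=
      Function.iterate_succ_apply' _ _ _
    rw [h]
    simp only [Tmap]
    have := heven.pow_nonneg (((Tmap 1 d)^[m] p).1 + ((Tmap 1 d)^[m] p).2)
    nlinarith
  have hlim : Filter.Tendsto (fun n => ((Tmap 1 d)^[n] p).2) Filter.atTop (nhds 0) := by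
    have h2 := (continuous_snd.tendsto ((0:ℝ),(0:ℝ))).comp hp
    exact h2
  exact le_of_tendsto hlim (Filter.eventually_atTop.2 ⟨n, fun m hm => hanti hm⟩)

lemma tangent_pow (d : ℕ) (hd : 2 ≤ d) (heven : Even d) (c v : ℝ) (hc : 0 < c) :
    c ^ d + (d:ℝ) * c ^ (d - 1) * (v - c) ≤ v ^ d := by
  have key : ∀ w : ℝ, 0 ≤ w → c ^ d + (d:ℝ) * c ^ (d - 1) * (w - c) ≤ w ^ d := by
    intro w hw
    have ha : (-2:ℝ) ≤ w / c - 1 := by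
      have : 0 ≤ w / c := div_nonneg hw hc.le
      linarith
    have h := one_add_mul_le_pow ha d
    rw [show (1:ℝ) + (w / c - 1) = w / c by ring] at h
    have h2 : c ^ d * (1 + (d:ℝ) * (w / c - 1)) ≤ c ^ d * (w / c) ^ d :=
      mul_le_mul_of_nonneg_left h (by positivity)
    have hcd : c ^ d * (w / c) ^ d = w ^ d := by
      rw [div_pow]
      field_simp
    have hpow : c ^ d = c ^ (d - 1) * c := by
      rw [← pow_succ]
      congr 1
      omega
    have hsplit : c ^ d * (1 + (d:ℝ) * (w / c - 1)) = c ^ d + (d:ℝ) * c ^ (d-1) * (w - c) := by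
      rw [hpow]
      field_simp
    rw [hsplit, hcd] at h2
    exact h2
  rcases le_or_gt 0 v with hv | hv
  · exact key v hv
  · have h1 := key (-v) (by linarith)
    have h2 : (-v) ^ d = v ^ d := heven.neg_pow v
    have h3 : (d:ℝ) * c ^ (d-1) * (v - c) ≤ (d:ℝ) * c ^ (d-1) * (-v - c) := by
      have : (0:ℝ) ≤ (d:ℝ) * c ^ (d-1) := by positivity
      nlinarith
    rw [h2] at h1
    linarith

lemma cpow_eq (d : ℕ) (hd : 2 ≤ d) :
    ((2 * d : ℝ) ^ (-(1 : ℝ) / ((d : ℝ) - 1))) ^ (d - 1 : ℕ) = (2 * (d:ℝ))⁻¹ := by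
  have hdpos : (0:ℝ) < 2 * d := by
    have : (2:ℝ) ≤ d := by exact_mod_cast hd
    linarith
  have hd1 : ((d:ℝ) - 1) ≠ 0 := by
    have : (2:ℝ) ≤ d := by exact_mod_cast hd
    intro h; linarith
  rw [← Real.rpow_natCast ((2 * (d:ℝ)) ^ (-(1 : ℝ) / ((d : ℝ) - 1))) (d-1),
      ← Real.rpow_mul hdpos.le]
  have hcast : ((d - 1 : ℕ) : ℝ) = (d:ℝ) - 1 := by
    have h1 : (1:ℕ) ≤ d := by omega
    push_cast [Nat.cast_sub h1]
    ring
  rw [hcast, show (-(1 : ℝ) / ((d : ℝ) - 1)) * ((d:ℝ) - 1) = -1 by field_simp,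
      Real.rpow_neg_one]

lemma Rd_pos (d : ℕ) (hd : 2 ≤ d) : 0 < Rd d := by
  have hd2 : (2:ℝ) ≤ d := by exact_mod_cast hd
  have h1 : 0 < 1 - 1 / (d:ℝ) := by
    have : 1 / (d:ℝ) ≤ 1/2 := by
      apply div_le_div_of_nonneg_left <;> linarith
    linarith
  exact mul_pos h1 (Real.rpow_pos_of_pos (by positivity) _)

lemma key_max (d : ℕ) (hd : 2 ≤ d) (heven : Even d) (v : ℝ) :
    v - 2 * v ^ d ≤ Rd d := by
  set c : ℝ := (2 * (d:ℝ)) ^ (-(1 : ℝ) / ((d : ℝ) - 1)) with hc_def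
  have hc : 0 < c := Real.rpow_pos_of_pos (by positivity) _
  have hd0 : (0:ℝ) < (d:ℝ) := by
    have : (2:ℝ) ≤ d := by exact_mod_cast hd
    linarith
  have hA : c ^ (d - 1 : ℕ) = (2 * (d:ℝ))⁻¹ := cpow_eq d hd
  have ht := tangent_pow d hd heven c v hc
  rw [hA] at ht
  have hdinv : (d:ℝ) * (2 * (d:ℝ))⁻¹ = 1/2 := by field_simp
  rw [hdinv] at ht
  have hpow : c ^ d = c ^ (d - 1) * c := by
    rw [← pow_succ]; congr 1; omega
  have hcd : c ^ d = (2 * (d:ℝ))⁻¹ * c := by rw [hpow, hA]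
  have hRd : Rd d = (1 - 1 / (d:ℝ)) * c := rfl
  rw [hRd]
  have hinv : (d:ℝ) * (1/(d:ℝ)) = 1 := by field_simp
  have hinv2 : (d:ℝ) * (2 * (d:ℝ))⁻¹ = 1/2 := by field_simp
  nlinarith [ht, hcd, hinv, hinv2, hc.le, hd0]

lemma nat_geom (d : ℕ) (hd3 : 3 ≤ d) : 2 * d ≤ 3 ^ (d - 1) := by
  induction d with
  | zero => omega
  | succ n ih =>
    rcases Nat.lt_or_ge n 3 with h | h
    · interval_cases n <;> simp_all
    · have := ih (by omega)
      have h1 : n + 1 - 1 = (n - 1) + 1 := by omega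
      rw [h1, pow_succ]
      omega

lemma three_pow (d : ℕ) (hd : 2 ≤ d) (heven : Even d) :
    Rd d ≤ (3 * Rd d) ^ d := by
  have hd0 : (0:ℝ) < (d:ℝ) := by
    have : (2:ℝ) ≤ d := by exact_mod_cast hd
    linarith
  have hRpos : 0 < Rd d := Rd_pos d hd
  have hmain : (1:ℝ) ≤ 3 ^ d * (Rd d) ^ (d - 1) := by
    have hA := cpow_eq d hd
    have hRd1 : (Rd d) ^ (d - 1) = (1 - 1/(d:ℝ)) ^ (d-1) * (2 * (d:ℝ))⁻¹ := by
      rw [Rd, mul_pow, hA]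
    rw [hRd1]
    have hgoal : 2 * (d:ℝ) ≤ 3 ^ d * (1 - 1/(d:ℝ)) ^ (d-1) := by
      rcases eq_or_lt_of_le hd with h2 | h3
      · subst h2
        norm_num
      · have hd3 : 3 ≤ d := h3
        have hd1 : (1:ℝ) < (d:ℝ) := by exact_mod_cast Nat.lt_of_lt_of_le Nat.one_lt_two hd
        have hfrac : (1:ℝ) - 1/(d:ℝ) = ((d:ℝ) - 1) / d := by field_simp
        have hb : (0:ℝ) < (d:ℝ) - 1 := by linarith
        have hexp : ((d:ℝ)/((d:ℝ)-1)) ^ (d-1 : ℕ) ≤ Real.exp 1 := by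
          have heq : (d:ℝ)/((d:ℝ)-1) = 1/((d:ℝ)-1) + 1 := by field_simp; ring
          have hle : (d:ℝ)/((d:ℝ)-1) ≤ Real.exp (1/((d:ℝ)-1)) := by
            rw [heq]; exact Real.add_one_le_exp _
          calc ((d:ℝ)/((d:ℝ)-1)) ^ (d-1:ℕ) ≤ (Real.exp (1/((d:ℝ)-1))) ^ (d-1:ℕ) := by
                apply pow_le_pow_left₀ (by positivity) hle
            _ = Real.exp (((d-1:ℕ):ℝ) * (1/((d:ℝ)-1))) := (Real.exp_nat_mul _ _).symm
            _ = Real.exp 1 := by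
                congr 1
                have hcast : ((d - 1 : ℕ) : ℝ) = (d:ℝ) - 1 := by
                  have h1 : (1:ℕ) ≤ d := by omega
                  push_cast [Nat.cast_sub h1]; ring
                rw [hcast]; field_simp
        have hexp3 : ((d:ℝ)/((d:ℝ)-1)) ^ (d-1 : ℕ) < 3 := by
          have := Real.exp_one_lt_d9
          linarith
        have hXpos : (0:ℝ) < ((d:ℝ)/((d:ℝ)-1)) ^ (d-1:ℕ) := by positivity
        have hthird : (1:ℝ)/3 ≤ (1 - 1/(d:ℝ)) ^ (d-1) := by
          rw [hfrac]
          have hipow : (((d:ℝ)-1)/d) ^ (d-1:ℕ) = (((d:ℝ)/((d:ℝ)-1)) ^ (d-1:ℕ))⁻¹ := by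
            rw [← inv_pow, inv_div]
          rw [hipow, one_div]
          exact inv_anti₀ hXpos hexp3.le
        have hgeom : 2 * (d:ℝ) ≤ 3 ^ (d-1:ℕ) := by
          exact_mod_cast nat_geom d hd3
        have h3d : (3:ℝ) ^ d = 3 * 3 ^ (d-1:ℕ) := by
          rw [← pow_succ']
          congr 1
          omega
        calc 2 * (d:ℝ) ≤ 3 ^ (d-1:ℕ) := hgeom
          _ = 3 ^ d * (1/3) := by rw [h3d]; ring
          _ ≤ 3 ^ d * (1 - 1/(d:ℝ))^(d-1) :=
              mul_le_mul_of_nonneg_left hthird (by positivity)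
    have hinv : (0:ℝ) < (2 * (d:ℝ))⁻¹ := by positivity
    have hmul : (2*(d:ℝ)) * (2*(d:ℝ))⁻¹ = 1 := by field_simp
    nlinarith [hgoal, hinv, hmul]
  calc Rd d = 1 * Rd d := (one_mul _).symm
    _ ≤ (3 ^ d * (Rd d) ^ (d-1)) * Rd d := mul_le_mul_of_nonneg_right hmain hRpos.le
    _ = (3 * Rd d) ^ d := by
        rw [mul_pow, mul_assoc, ← pow_succ]
        congr 2
        omega

/-- for even `d`, the basin of the origin is contained in
`(−5R_d, R_d) × (0, 2R_d) ∪ {(0,0)}`; in particular it is bounded. -/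
theorem stmt7 (d : ℕ) (hd : 2 ≤ d) (heven : Even d) :
    basin 1 d ⊆ (Set.Ioo (-(5 * Rd d)) (Rd d) ×ˢ Set.Ioo 0 (2 * Rd d)) ∪ {((0 : ℝ), (0 : ℝ))} ∧
    Bornology.IsBounded (basin 1 d) := by
  have hdne : d ≠ 0 := by omega
  have hbox : basin 1 d ⊆
      (Set.Ioo (-(5 * Rd d)) (Rd d) ×ˢ Set.Ioo 0 (2 * Rd d)) ∪ {((0 : ℝ), (0 : ℝ))} := by
    intro p hp
    by_cases hp0 : p = ((0:ℝ), (0:ℝ))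
    · right; simp [hp0]
    · left
      obtain ⟨x, y⟩ := p
      have h0 := snd_nonneg_aux d heven (x, y) hp 0
      have h1 := snd_nonneg_aux d heven (x, y) hp 1
      have h2 := snd_nonneg_aux d heven (x, y) hp 2
      simp only [Function.iterate_zero, id_eq] at h0
      rw [Function.iterate_one] at h1
      simp only [Tmap, one_mul, mul_one] at h1
      -- h1 : 0 ≤ y - 2 * (x+y)^d
      rw [show (2:ℕ) = 1 + 1 from rfl, Function.iterate_add_apply, Function.iterate_one] at h2
      simp only [Tmap, one_mul, mul_one] at h2
      have h2' : 0 ≤ (y - 2 * (x + y) ^ d) - 2 * (2 * y - 3 * (x + y) ^ d) ^ d := by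
        have e : y - (x + y) ^ d + (y - 2 * (x + y) ^ d) = 2 * y - 3 * (x + y) ^ d := by ring
        rw [e] at h2
        linarith
      clear h2
      set S : ℝ := (x + y) ^ d with hS_def
      set u1 : ℝ := 2 * y - 3 * S with hu1_def
      set U : ℝ := u1 ^ d with hU_def
      have hSnn : 0 ≤ S := heven.pow_nonneg _
      have hUnn : 0 ≤ U := heven.pow_nonneg _
      have hne : x ≠ 0 ∨ y ≠ 0 := by
        by_contra h
        push_neg at h
        exact hp0 (by simp [h.1, h.2])
      -- y > 0
      have hy : 0 < y := by
        rcases lt_or_eq_of_le h0 with h | h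
        · simpa using h
        · exfalso
          have hy0 : y = 0 := by simpa using h.symm
          have hS0 : S ≤ 0 := by rw [hy0] at h1; linarith
          have hS00 : S = 0 := le_antisymm hS0 hSnn
          have hs0 : x + y = 0 := by
            have := pow_eq_zero_iff (n := d) hdne |>.1 (hS_def ▸ hS00)
            exact this
          have hx0 : x = 0 := by linarith [hy0 ▸ hs0]
          rcases hne with h' | h' <;> [exact h' hx0; exact h' hy0]
      -- y1 > 0
      have hy1 : 0 < y - 2 * S := by
        rcases lt_or_eq_of_le h1 with h | h
        · linarith [h]
        · exfalso
          have hy1z : y - 2 * S = 0 := h.symm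
          have hU0 : U = 0 := by nlinarith [h2']
          have hu10 : u1 = 0 := pow_eq_zero_iff (n := d) hdne |>.1 (hU_def ▸ hU0)
          -- y = 2*u1 - 3*(y - 2*S)
          have : y = 0 := by
            have : y = 2 * u1 - 3 * (y - 2 * S) := by rw [hu1_def]; ring
            rw [hu10, hy1z] at this
            linarith
          linarith [hy]
      -- u1 ≠ 0, so U > 0
      have hu1ne : u1 ≠ 0 := by
        intro h
        have : y = 2 * u1 - 3 * (y - 2 * S) := by rw [hu1_def]; ring
        rw [h] at this
        linarith
      have hUpos : 0 < U := by
        rcases lt_or_eq_of_le hUnn with h | h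
        · exact h
        · exact absurd (pow_eq_zero_iff (n := d) hdne |>.1 (hU_def ▸ h.symm)) hu1ne
      have hR := Rd_pos d hd
      have hKu1 : u1 - 2 * U ≤ Rd d := key_max d hd heven u1
      have hKs : (x + y) - 2 * S ≤ Rd d := key_max d hd heven (x + y)
      -- y < 2R
      have hy2R : y < 2 * Rd d := by
        have hyeq : y = 2 * u1 - 3 * (y - 2 * S) := by rw [hu1_def]; ring
        linarith [h2', hKu1, hUpos]
      -- x < R
      have hxR : x < Rd d := by linarith [hKs, hy1]
      -- S ≤ R, so |x+y| ≤ 3R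
      have hSR : S ≤ Rd d := by
        have : S = u1 - 2 * (y - 2 * S) := by rw [hu1_def]; ring
        linarith [h2', hKu1, hUnn]
      have habs : |x + y| ≤ 3 * Rd d := by
        have hp1 : |x + y| ^ d ≤ (3 * Rd d) ^ d := by
          rw [heven.pow_abs]
          exact le_trans hSR (three_pow d hd heven)
        exact (pow_le_pow_iff_left₀ (abs_nonneg _) (by linarith) hdne).1 hp1
      have hxlb : -(5 * Rd d) < x := by
        have := neg_abs_le (x + y)
        linarith
      exact Set.mem_prod.2 ⟨⟨hxlb, hxR⟩, hy, hy2R⟩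
  refine ⟨hbox, ?_⟩
  exact (((Metric.isBounded_Ioo _ _).prod (Metric.isBounded_Ioo _ _)).union
    Bornology.isBounded_singleton).subset hbox
end

section
/- Let d ≥ 3 be odd and T_d := T_{1,d}. Let Q* ⊂ ℝ² be the convex hull of the six points (2^{1−d}, 0), (2^{1−d}, 2^{1−d}), (0, 2^{1−d}), (−2^{−d}, 0), (−2^{−d}, −2^{−d}), (0, −2^{−d}). Then Q* ⊆ 𝒜_d(0); in particular the segment [−1/2, 0] × {0} is contained in 𝒜_d(0). Moreover 𝒜_d(0) is an open and simply connected subset of ℝ². -/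
/-- The hexagon `Q* = Q_{1/2}`: convex hull of the six indicated vertices,
with `2·(1/2)^d = 2^{1−d}` and `(1/2)^d = 2^{−d}`. -/
noncomputable def Qstar (d : ℕ) : Set (ℝ × ℝ) :=
  convexHull ℝ
    {(((2 : ℝ) ^ ((1 : ℤ) - (d : ℤ)), (0 : ℝ))),
     (((2 : ℝ) ^ ((1 : ℤ) - (d : ℤ)), (2 : ℝ) ^ ((1 : ℤ) - (d : ℤ)))),
     (((0 : ℝ), (2 : ℝ) ^ ((1 : ℤ) - (d : ℤ)))),
     ((-(2 : ℝ) ^ (-(d : ℤ)), (0 : ℝ))),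
     ((-(2 : ℝ) ^ (-(d : ℤ)), -(2 : ℝ) ^ (-(d : ℤ)))),
     (((0 : ℝ), -(2 : ℝ) ^ (-(d : ℤ))))}

open Filter Function Set Topology

noncomputable def Wfn (p : ℝ × ℝ) : ℝ := |p.1 + p.2| + 2 * |p.1 - p.2|

noncomputable def Bset : Set (ℝ × ℝ) := {p | Wfn p < 11/20}

lemma Wfn_nonneg (p : ℝ × ℝ) : 0 ≤ Wfn p := by unfold Wfn; positivity

lemma abs_fst_le (p : ℝ × ℝ) : |p.1| ≤ Wfn p := by
  have h : |(p.1 + p.2) + (p.1 - p.2)| ≤ |p.1 + p.2| + |p.1 - p.2| := abs_add_le _ _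
  have h2 : (p.1 + p.2) + (p.1 - p.2) = 2 * p.1 := by ring
  rw [h2, abs_mul] at h
  have h3 : |(2:ℝ)| = 2 := by norm_num
  rw [h3] at h
  unfold Wfn
  have := abs_nonneg (p.1 - p.2)
  have := abs_nonneg (p.1 + p.2)
  linarith

lemma abs_snd_le (p : ℝ × ℝ) : |p.2| ≤ Wfn p := by
  have h : |(p.1 + p.2) - (p.1 - p.2)| ≤ |p.1 + p.2| + |p.1 - p.2| := abs_sub _ _
  have h2 : (p.1 + p.2) - (p.1 - p.2) = 2 * p.2 := by ring
  rw [h2, abs_mul] at h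
  have h3 : |(2:ℝ)| = 2 := by norm_num
  rw [h3] at h
  unfold Wfn
  have := abs_nonneg (p.1 - p.2)
  have := abs_nonneg (p.1 + p.2)
  linarith

lemma Wstep (d : ℕ) (hd : 3 ≤ d) (hodd : Odd d) (p : ℝ × ℝ)
    (hu : 3 * |p.1 + p.2| ^ (d - 1) ≤ 1) :
    Wfn (Tmap 1 d p) ≤ Wfn p - (|p.1 - p.2| + |p.1 + p.2| ^ d) := by
  obtain ⟨e, rfl⟩ : ∃ e, d = e + 1 := ⟨d - 1, by omega⟩
  have he : Even e := Nat.not_odd_iff_even.mp (Nat.odd_add_one.mp hodd)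
  have hd1 : (e + 1) - 1 = e := by omega
  rw [hd1] at hu
  set u := p.1 + p.2 with hu'
  set v := p.1 - p.2 with hv'
  have hpe : |u| ^ e = u ^ e := he.pow_abs u
  have hsum : (Tmap 1 (e+1) p).1 + (Tmap 1 (e+1) p).2 = (u - 3 * u ^ (e+1)) - v := by
    simp only [Tmap, ← hu', ← hv']; ring
  have hdiff : (Tmap 1 (e+1) p).1 - (Tmap 1 (e+1) p).2 = u ^ (e+1) := by
    simp only [Tmap, ← hu']; ring
  have key : |u - 3 * u ^ (e+1)| = |u| - 3 * |u| ^ (e+1) := by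
    have h1 : u - 3 * u ^ (e+1) = u * (1 - 3 * |u| ^ e) := by rw [hpe]; ring
    have h2 : |u| ^ (e+1) = |u| * |u| ^ e := by ring
    rw [h1, abs_mul, abs_of_nonneg (show (0:ℝ) ≤ 1 - 3 * |u| ^ e by linarith), h2]
    ring
  have habs : |(u - 3 * u ^ (e+1)) - v| ≤ |u| - 3 * |u| ^ (e+1) + |v| := by
    calc |(u - 3 * u ^ (e+1)) - v| ≤ |u - 3 * u ^ (e+1)| + |v| := abs_sub _ _
    _ = |u| - 3 * |u| ^ (e+1) + |v| := by rw [key]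
  have hap : |u ^ (e+1)| = |u| ^ (e+1) := abs_pow u (e+1)
  show |(Tmap 1 (e+1) p).1 + (Tmap 1 (e+1) p).2| + 2 * |(Tmap 1 (e+1) p).1 - (Tmap 1 (e+1) p).2|
      ≤ (|u| + 2 * |v|) - (|v| + |u| ^ (e+1))
  rw [hsum, hdiff, hap]
  linarith

lemma cond_small (d : ℕ) (hd : 3 ≤ d) {t : ℝ} (h0 : 0 ≤ t) (ht : t ≤ 11/20) :
    3 * t ^ (d - 1) ≤ 1 := by
  have h1 : t ^ (d-1) ≤ (11/20 : ℝ) ^ (d-1) := pow_le_pow_left₀ h0 ht _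
  have h2 : (11/20 : ℝ) ^ (d-1) ≤ (11/20 : ℝ) ^ 2 :=
    pow_le_pow_of_le_one (by norm_num) (by norm_num) (by omega)
  nlinarith

lemma mem_B_step (d : ℕ) (hd : 3 ≤ d) (hodd : Odd d) (p : ℝ × ℝ) (hp : p ∈ Bset) :
    Tmap 1 d p ∈ Bset ∧ Wfn (Tmap 1 d p) ≤ Wfn p - (Wfn p / 4) ^ d := by
  have hW : Wfn p < 11/20 := hp
  have hW0 : 0 ≤ Wfn p := Wfn_nonneg p
  have hau : |p.1 + p.2| ≤ Wfn p := by
    unfold Wfn; have := abs_nonneg (p.1 - p.2); linarith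
  have hav : 2 * |p.1 - p.2| ≤ Wfn p := by
    unfold Wfn; have := abs_nonneg (p.1 + p.2); linarith
  have hcond : 3 * |p.1 + p.2| ^ (d-1) ≤ 1 :=
    cond_small d hd (abs_nonneg _) (by linarith)
  have hstep := Wstep d hd hodd p hcond
  set a := |p.1 + p.2| with ha'
  set b := |p.1 - p.2| with hb'
  have ha0 : 0 ≤ a := abs_nonneg _
  have hb0 : 0 ≤ b := abs_nonneg _
  have hb1 : b ≤ 1 := by linarith
  have hlow : (Wfn p / 4) ^ d ≤ b + a ^ d := by
    have hWab : Wfn p = a + 2 * b := rfl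
    have hM : Wfn p / 4 ≤ max a b := by
      have h1 : a ≤ max a b := le_max_left _ _
      have h2 : b ≤ max a b := le_max_right _ _
      have h3 : 0 ≤ max a b := le_trans ha0 h1
      rw [hWab]; linarith
    have hM0 : 0 ≤ Wfn p / 4 := by linarith
    have h4 : (Wfn p / 4) ^ d ≤ (max a b) ^ d := pow_le_pow_left₀ hM0 hM d
    rcases max_cases a b with ⟨hmax, _⟩ | ⟨hmax, _⟩
    · rw [hmax] at h4; linarith
    · rw [hmax] at h4
      have : b ^ d ≤ b := pow_le_of_le_one hb0 hb1 (by omega)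
      have : 0 ≤ a ^ d := pow_nonneg ha0 d
      linarith
  constructor
  · show Wfn (Tmap 1 d p) < 11/20
    have : 0 ≤ (Wfn p / 4) ^ d := pow_nonneg (by linarith) d
    linarith
  · linarith

lemma Wfn_zero : Wfn ((0:ℝ), (0:ℝ)) = 0 := by unfold Wfn; norm_num

lemma Wfn_continuous : Continuous Wfn := by
  unfold Wfn
  fun_prop

lemma Bset_open : IsOpen Bset := isOpen_lt Wfn_continuous continuous_const

lemma Bset_convex : Convex ℝ Bset := by
  intro p hp q hq s t hs ht hst
  have hp' : Wfn p < 11/20 := hp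
  have hq' : Wfn q < 11/20 := hq
  show Wfn (s • p + t • q) < 11/20
  have hco : (s • p + t • q).1 = s * p.1 + t * q.1 ∧ (s • p + t • q).2 = s * p.2 + t * q.2 := by
    constructor <;> simp [Prod.smul_fst, Prod.smul_snd, smul_eq_mul]
  unfold Wfn at *
  rw [hco.1, hco.2]
  have h1 : |s * p.1 + t * q.1 + (s * p.2 + t * q.2)|
      ≤ s * |p.1 + p.2| + t * |q.1 + q.2| := by
    calc |s * p.1 + t * q.1 + (s * p.2 + t * q.2)|
        = |s * (p.1 + p.2) + t * (q.1 + q.2)| := by ring_nf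
      _ ≤ |s * (p.1 + p.2)| + |t * (q.1 + q.2)| := abs_add_le _ _
      _ = s * |p.1 + p.2| + t * |q.1 + q.2| := by
          rw [abs_mul, abs_mul, abs_of_nonneg hs, abs_of_nonneg ht]
  have h2 : |s * p.1 + t * q.1 - (s * p.2 + t * q.2)|
      ≤ s * |p.1 - p.2| + t * |q.1 - q.2| := by
    calc |s * p.1 + t * q.1 - (s * p.2 + t * q.2)|
        = |s * (p.1 - p.2) + t * (q.1 - q.2)| := by ring_nf
      _ ≤ |s * (p.1 - p.2)| + |t * (q.1 - q.2)| := abs_add_le _ _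
      _ = s * |p.1 - p.2| + t * |q.1 - q.2| := by
          rw [abs_mul, abs_mul, abs_of_nonneg hs, abs_of_nonneg ht]
  set A1 := |p.1 + p.2| + 2 * |p.1 - p.2| with hA1
  set A2 := |q.1 + q.2| + 2 * |q.1 - q.2| with hA2
  have hM : max A1 A2 < 11/20 := max_lt hp' hq'
  have hsp : s * A1 ≤ s * max A1 A2 := mul_le_mul_of_nonneg_left (le_max_left _ _) hs
  have htq : t * A2 ≤ t * max A1 A2 := mul_le_mul_of_nonneg_left (le_max_right _ _) ht
  have hsum : s * max A1 A2 + t * max A1 A2 = max A1 A2 := by rw [← add_mul, hst, one_mul]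
  nlinarith [hsp, htq, hsum, hM, h1, h2]

lemma B_converge (d : ℕ) (hd : 3 ≤ d) (hodd : Odd d) (p : ℝ × ℝ) (hp : p ∈ Bset) :
    Tendsto (fun n => (Tmap 1 d)^[n] p) atTop (𝓝 (0, 0)) := by
  have hmem : ∀ n, (Tmap 1 d)^[n] p ∈ Bset := by
    intro n
    induction n with
    | zero => simpa using hp
    | succ n ih =>
        rw [Function.iterate_succ_apply']
        exact (mem_B_step d hd hodd _ ih).1
  set w : ℕ → ℝ := fun n => Wfn ((Tmap 1 d)^[n] p) with hw
  have hdec : ∀ n, w (n+1) ≤ w n - (w n / 4) ^ d := by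
    intro n
    have := (mem_B_step d hd hodd _ (hmem n)).2
    simpa [hw, Function.iterate_succ_apply'] using this
  have hw0 : ∀ n, 0 ≤ w n := fun n => Wfn_nonneg _
  have hant : Antitone w := antitone_nat_of_succ_le fun n => by
    have h1 : 0 ≤ (w n / 4) ^ d := pow_nonneg (by linarith [hw0 n]) d
    linarith [hdec n]
  have hbdd : BddBelow (Set.range w) := ⟨0, by rintro x ⟨n, rfl⟩; exact hw0 n⟩
  have htend : Tendsto w atTop (𝓝 (⨅ n, w n)) := tendsto_atTop_ciInf hant hbdd
  set L := ⨅ n, w n with hL'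
  have hL0 : 0 ≤ L := le_ciInf hw0
  have hshift : Tendsto (fun n => w (n+1)) atTop (𝓝 L) :=
    htend.comp (tendsto_add_atTop_nat 1)
  have hrhs : Tendsto (fun n => w n - (w n / 4) ^ d) atTop (𝓝 (L - (L / 4) ^ d)) :=
    htend.sub ((htend.div_const 4).pow d)
  have hle : L ≤ L - (L / 4) ^ d := le_of_tendsto_of_tendsto' hshift hrhs hdec
  have hLz : L = 0 := by
    have h1 : (L / 4) ^ d ≤ 0 := by linarith
    have h2 : 0 ≤ (L / 4) ^ d := pow_nonneg (by linarith) d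
    have h3 : (L / 4) ^ d = 0 := le_antisymm h1 h2
    have h4 : L / 4 = 0 := pow_eq_zero_iff (by omega : d ≠ 0) |>.mp h3
    linarith
  rw [hLz] at htend
  have hfst : Tendsto (fun n => ((Tmap 1 d)^[n] p).1) atTop (𝓝 0) := by
    apply squeeze_zero_norm _ htend
    intro n
    simpa [Real.norm_eq_abs] using abs_fst_le ((Tmap 1 d)^[n] p)
  have hsnd : Tendsto (fun n => ((Tmap 1 d)^[n] p).2) atTop (𝓝 0) := by
    apply squeeze_zero_norm _ htend
    intro n
    simpa [Real.norm_eq_abs] using abs_snd_le ((Tmap 1 d)^[n] p)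
  exact hfst.prodMk_nhds hsnd

lemma Tmap_continuous (d : ℕ) : Continuous (Tmap 1 d) := by
  unfold Tmap; fun_prop

lemma basin_eq (d : ℕ) (hd : 3 ≤ d) (hodd : Odd d) :
    basin 1 d = ⋃ n, (Tmap 1 d)^[n] ⁻¹' Bset := by
  ext p
  constructor
  · intro hp
    have h0 : ((0:ℝ), (0:ℝ)) ∈ Bset := by
      show Wfn ((0:ℝ),(0:ℝ)) < 11/20
      rw [Wfn_zero]; norm_num
    have hev := hp.eventually (Bset_open.eventually_mem h0)
    obtain ⟨n, hn⟩ := hev.exists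
    exact mem_iUnion.mpr ⟨n, hn⟩
  · intro hp
    obtain ⟨n, hn⟩ := mem_iUnion.mp hp
    have hconv := B_converge d hd hodd _ hn
    have heq : (fun m => (Tmap 1 d)^[m] ((Tmap 1 d)^[n] p))
        = fun m => (Tmap 1 d)^[m + n] p :=
      funext fun m => (Function.iterate_add_apply _ m n p).symm
    rw [heq] at hconv
    exact (tendsto_add_atTop_iff_nat n).mp hconv

lemma exists_homeo (d : ℕ) (hd : 3 ≤ d) (hodd : Odd d) :
    ∃ e : (ℝ × ℝ) ≃ₜ (ℝ × ℝ), ⇑e = Tmap 1 d := by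
  have hsm : StrictMono (fun x : ℝ => x ^ d) := Odd.strictMono_pow hodd
  have htop : Tendsto (fun x : ℝ => x ^ d) atTop atTop := tendsto_pow_atTop (by omega)
  have hbot : Tendsto (fun x : ℝ => x ^ d) atBot atBot := by
    have h1 : Tendsto (fun x : ℝ => -((-x) ^ d)) atBot atBot :=
      tendsto_neg_atTop_atBot.comp
        ((tendsto_pow_atTop (by omega : d ≠ 0)).comp tendsto_neg_atBot_atTop)
    refine h1.congr fun x => ?_
    rw [Odd.neg_pow hodd]; ring
  have hsurj : Function.Surjective (fun x : ℝ => x ^ d) :=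
    (continuous_pow d).surjective htop hbot
  let oi : ℝ ≃o ℝ := StrictMono.orderIsoOfSurjective _ hsm hsurj
  have hoi : ∀ x : ℝ, oi x = x ^ d := fun x => rfl
  have hrt_pow : ∀ x : ℝ, oi.symm (x ^ d) = x := fun x => by
    rw [← hoi]; exact oi.symm_apply_apply x
  have hpow_rt : ∀ y : ℝ, (oi.symm y) ^ d = y := fun y => by
    conv_rhs => rw [← oi.apply_symm_apply y]
    rw [hoi]
  have hrtc : Continuous (⇑oi.symm) := (OrderIso.toHomeomorph oi.symm).continuous
  refine ⟨{ toFun := Tmap 1 d,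
            invFun := fun q => (oi.symm (q.1 - q.2) - (2 * q.1 - q.2), 2 * q.1 - q.2),
            left_inv := ?_, right_inv := ?_,
            continuous_toFun := Tmap_continuous d,
            continuous_invFun := ?_ }, rfl⟩
  · intro p
    have h1 : (Tmap 1 d p).1 - (Tmap 1 d p).2 = (p.1 + p.2) ^ d := by
      simp only [Tmap]; ring
    have h2 : 2 * (Tmap 1 d p).1 - (Tmap 1 d p).2 = p.2 := by
      simp only [Tmap]; ring
    show (oi.symm ((Tmap 1 d p).1 - (Tmap 1 d p).2) - (2 * (Tmap 1 d p).1 - (Tmap 1 d p).2),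
          2 * (Tmap 1 d p).1 - (Tmap 1 d p).2) = p
    rw [h1, h2, hrt_pow]
    have : p.1 + p.2 - p.2 = p.1 := by ring
    rw [this]
  · intro q
    show Tmap 1 d (oi.symm (q.1 - q.2) - (2 * q.1 - q.2), 2 * q.1 - q.2) = q
    have hsum : (oi.symm (q.1 - q.2) - (2 * q.1 - q.2)) + (2 * q.1 - q.2)
        = oi.symm (q.1 - q.2) := by ring
    simp only [Tmap, hsum, hpow_rt]
    have e1 : 2 * q.1 - q.2 - 1 * (q.1 - q.2) = q.1 := by ring
    have e2 : 2 * q.1 - q.2 - 2 * 1 * (q.1 - q.2) = q.2 := by ring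
    rw [e1, e2]
  · exact ((hrtc.comp (continuous_fst.sub continuous_snd)).sub
      (by fun_prop)).prodMk (by fun_prop)

lemma convex_phi_le (M : ℝ) :
    Convex ℝ {p : ℝ × ℝ | |p.1 + p.2| + |p.1 - p.2| ≤ M} := by
  intro p hp q hq s t hs ht hst
  have hp' : |p.1 + p.2| + |p.1 - p.2| ≤ M := hp
  have hq' : |q.1 + q.2| + |q.1 - q.2| ≤ M := hq
  show |(s • p + t • q).1 + (s • p + t • q).2| + |(s • p + t • q).1 - (s • p + t • q).2| ≤ M
  have hco1 : (s • p + t • q).1 = s * p.1 + t * q.1 := by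
    simp [Prod.smul_fst, smul_eq_mul]
  have hco2 : (s • p + t • q).2 = s * p.2 + t * q.2 := by
    simp [Prod.smul_snd, smul_eq_mul]
  rw [hco1, hco2]
  have h1 : |s * p.1 + t * q.1 + (s * p.2 + t * q.2)|
      ≤ s * |p.1 + p.2| + t * |q.1 + q.2| := by
    calc |s * p.1 + t * q.1 + (s * p.2 + t * q.2)|
        = |s * (p.1 + p.2) + t * (q.1 + q.2)| := by ring_nf
      _ ≤ |s * (p.1 + p.2)| + |t * (q.1 + q.2)| := abs_add_le _ _
      _ = s * |p.1 + p.2| + t * |q.1 + q.2| := by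
          rw [abs_mul, abs_mul, abs_of_nonneg hs, abs_of_nonneg ht]
  have h2 : |s * p.1 + t * q.1 - (s * p.2 + t * q.2)|
      ≤ s * |p.1 - p.2| + t * |q.1 - q.2| := by
    calc |s * p.1 + t * q.1 - (s * p.2 + t * q.2)|
        = |s * (p.1 - p.2) + t * (q.1 - q.2)| := by ring_nf
      _ ≤ |s * (p.1 - p.2)| + |t * (q.1 - q.2)| := abs_add_le _ _
      _ = s * |p.1 - p.2| + t * |q.1 - q.2| := by
          rw [abs_mul, abs_mul, abs_of_nonneg hs, abs_of_nonneg ht]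
  have hsp : s * (|p.1 + p.2| + |p.1 - p.2|) ≤ s * M := mul_le_mul_of_nonneg_left hp' hs
  have htq : t * (|q.1 + q.2| + |q.1 - q.2|) ≤ t * M := mul_le_mul_of_nonneg_left hq' ht
  have hM : s * M + t * M = M := by rw [← add_mul, hst, one_mul]
  nlinarith

lemma two_zpow_le (d : ℕ) (hd : 3 ≤ d) : (2:ℝ) ^ (-(d:ℤ)) ≤ 1/8 := by
  have h3 : (-(d:ℤ)) ≤ -3 := by omega
  calc (2:ℝ) ^ (-(d:ℤ)) ≤ (2:ℝ) ^ (-3:ℤ) := zpow_le_zpow_right₀ (by norm_num) h3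
    _ = 1/8 := by norm_num

lemma qstar_bound (d : ℕ) (hd : 3 ≤ d) :
    Qstar d ⊆ {p : ℝ × ℝ | |p.1 + p.2| + |p.1 - p.2| ≤ 4 * (2:ℝ) ^ (-(d:ℤ))} := by
  set b : ℝ := (2:ℝ) ^ (-(d:ℤ)) with hb'
  have hb0 : (0:ℝ) < b := zpow_pos (by norm_num) _
  have ha : (2:ℝ) ^ ((1:ℤ) - (d:ℤ)) = 2 * b := by
    rw [hb', sub_eq_add_neg, zpow_add₀ (two_ne_zero : (2:ℝ) ≠ 0), zpow_one]
  have key : ∀ z w : ℝ, -(2*b) ≤ z → z ≤ 2*b → -(2*b) ≤ w → w ≤ 2*b → |z| + |w| ≤ 4*b := by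
    intro z w h1 h2 h3 h4
    have hz := abs_le.mpr ⟨h1, h2⟩
    have hw := abs_le.mpr ⟨h3, h4⟩
    linarith
  have key2 : ∀ z : ℝ, -(4*b) ≤ z → z ≤ 4*b → |z| ≤ 4*b := fun z h1 h2 => abs_le.mpr ⟨h1, h2⟩
  apply convexHull_min _ (convex_phi_le _)
  intro p hp
  simp only [Set.mem_insert_iff, Set.mem_singleton_iff] at hp
  rcases hp with rfl | rfl | rfl | rfl | rfl | rfl <;>
    simp only [Set.mem_setOf_eq, ha, add_zero, sub_zero, zero_add, zero_sub, sub_self,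
      abs_zero, abs_neg, sub_neg_eq_add]
  all_goals first
  | (apply key <;> linarith)
  | (apply key2 <;> linarith)

lemma qstar_step (d : ℕ) (hd : 3 ≤ d) (hodd : Odd d) :
    ∀ p ∈ Qstar d, Tmap 1 d p ∈ Bset := by
  intro p hp
  have hb := qstar_bound d hd hp
  simp only [Set.mem_setOf_eq] at hb
  have h18 : (2:ℝ) ^ (-(d:ℤ)) ≤ 1/8 := two_zpow_le d hd
  have huv : |p.1 + p.2| + |p.1 - p.2| ≤ 1/2 := by linarith
  have hu0 := abs_nonneg (p.1 + p.2)
  have hv0 := abs_nonneg (p.1 - p.2)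
  have hcond : 3 * |p.1 + p.2| ^ (d-1) ≤ 1 :=
    cond_small d hd hu0 (by linarith)
  have hstep := Wstep d hd hodd p hcond
  show Wfn (Tmap 1 d p) < 11/20
  have hWp : Wfn p = |p.1 + p.2| + 2 * |p.1 - p.2| := rfl
  have hpw : 0 ≤ |p.1 + p.2| ^ d := pow_nonneg hu0 d
  linarith

lemma seg_step (d : ℕ) (hd : 3 ≤ d) (hodd : Odd d) (x : ℝ)
    (h1 : -(1:ℝ)/2 ≤ x) (h2 : x ≤ 0) : (Tmap 1 d)^[2] (x, 0) ∈ Bset := by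
  have hx2 : |x| ≤ 1/2 := abs_le.mpr ⟨by linarith, h2.trans (by norm_num)⟩
  have hx8 : |x| ^ d ≤ 1/8 := by
    calc |x| ^ d ≤ (1/2:ℝ) ^ d := pow_le_pow_left₀ (abs_nonneg _) hx2 d
      _ ≤ (1/2:ℝ) ^ 3 := pow_le_pow_of_le_one (by norm_num) (by norm_num) hd
      _ = 1/8 := by norm_num
  have hx0 : (0:ℝ) ≤ |x| ^ d := pow_nonneg (abs_nonneg _) d
  set q := Tmap 1 d (x, 0) with hq
  have hqu : q.1 + q.2 = -(3 * x ^ d) := by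
    rw [hq]; simp only [Tmap]; ring
  have hqv : q.1 - q.2 = x ^ d := by
    rw [hq]; simp only [Tmap]; ring
  have hau : |q.1 + q.2| = 3 * |x| ^ d := by
    rw [hqu, abs_neg, abs_mul, abs_pow]; norm_num
  have hav : |q.1 - q.2| = |x| ^ d := by rw [hqv, abs_pow]
  have hcond : 3 * |q.1 + q.2| ^ (d-1) ≤ 1 := by
    apply cond_small d hd (abs_nonneg _)
    rw [hau]; linarith
  have hstep := Wstep d hd hodd q hcond
  have hit : (Tmap 1 d)^[2] (x, 0) = Tmap 1 d q := by
    rw [hq]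
    rfl
  rw [hit]
  show Wfn (Tmap 1 d q) < 11/20
  have hWq : Wfn q = |q.1 + q.2| + 2 * |q.1 - q.2| := rfl
  have hq0 : 0 ≤ |q.1 + q.2| ^ d := pow_nonneg (abs_nonneg _) d
  rw [hau, hav] at hWq
  rw [hav] at hstep
  linarith

noncomputable def pathInto {X : Type*} [TopologicalSpace X] {A : Set X} {x y : ↥A}
    (γ : Path x y) {s : Set X} (h : ∀ t, (γ t : X) ∈ s)
    (hx : (x : X) ∈ s) (hy : (y : X) ∈ s) :
    Path (⟨(x : X), hx⟩ : ↥s) (⟨(y : X), hy⟩ : ↥s) where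
  toFun t := ⟨(γ t : X), h t⟩
  continuous_toFun := (continuous_subtype_val.comp γ.continuous).subtype_mk _
  source' := Subtype.ext (by simp)
  target' := Subtype.ext (by simp)


/-- for odd `d ≥ 3`, `Q* ⊆ 𝒜_d(0)`, the segment
`[−1/2,0] × {0}` lies in the basin, and the basin is open and simply
connected. -/
theorem stmt10 (d : ℕ) (hd : 3 ≤ d) (hodd : Odd d) :
    Qstar d ⊆ basin 1 d ∧
    (Set.Icc (-(1 : ℝ) / 2) 0 ×ˢ ({0} : Set ℝ)) ⊆ basin 1 d ∧
    IsOpen (basin 1 d) ∧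
    SimplyConnectedSpace ↥(basin 1 d) := by
  obtain ⟨e, he⟩ := exists_homeo d hd hodd
  set S : ℕ → Set (ℝ × ℝ) := fun n => (Tmap 1 d)^[n] ⁻¹' Bset with hS
  have hbeq : basin 1 d = ⋃ n, S n := basin_eq d hd hodd
  have hS0 : S 0 = Bset := by simp [hS]
  have hSsucc : ∀ n, S (n+1) = Tmap 1 d ⁻¹' S n := by
    intro n; ext p
    simp [hS, Function.iterate_succ_apply]
  have h0B : ((0:ℝ),(0:ℝ)) ∈ Bset := by
    show Wfn ((0:ℝ),(0:ℝ)) < 11/20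
    rw [Wfn_zero]; norm_num
  have hmono : ∀ n, S n ⊆ S (n+1) := by
    intro n
    induction n with
    | zero =>
        rw [hS0, hSsucc 0]
        intro p hp
        show Tmap 1 d p ∈ S 0
        rw [hS0]
        exact (mem_B_step d hd hodd p hp).1
    | succ n ih =>
        rw [hSsucc n, hSsucc (n+1)]
        exact preimage_mono ih
  have hmono' : Monotone S := monotone_nat_of_le_succ hmono
  have hopenS : ∀ n, IsOpen (S n) := fun n =>
    Bset_open.preimage ((Tmap_continuous d).iterate n)
  have hpre : ∀ n, S (n+1) = e.symm '' S n := by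
    intro n
    rw [hSsucc n, ← he]
    ext p
    constructor
    · intro hp
      exact ⟨e p, hp, e.symm_apply_apply p⟩
    · rintro ⟨q, hq, rfl⟩
      show e (e.symm q) ∈ S n
      rw [e.apply_symm_apply]
      exact hq
  have hpc : ∀ n, IsPathConnected (S n) := by
    intro n
    induction n with
    | zero => rw [hS0]; exact Bset_convex.isPathConnected ⟨_, h0B⟩
    | succ n ih => rw [hpre n]; exact ih.image e.symm.continuous
  have hcontr : ∀ n, ContractibleSpace ↥(S n) := by
    intro n
    induction n with
    | zero => rw [hS0]; exact Bset_convex.contractibleSpace ⟨_, h0B⟩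
    | succ n ih =>
        haveI := ih
        rw [hpre n]
        exact ((Homeomorph.image e.symm (S n)).symm).contractibleSpace
  have hsc : ∀ n, SimplyConnectedSpace ↥(S n) := fun n => by
    haveI := hcontr n; infer_instance
  refine ⟨?_, ?_, ?_, ?_⟩
  · intro p hp
    rw [hbeq]
    refine mem_iUnion.mpr ⟨1, ?_⟩
    show (Tmap 1 d)^[1] p ∈ Bset
    rw [Function.iterate_one]
    exact qstar_step d hd hodd p hp
  · rintro ⟨x, y⟩ ⟨hx, hy⟩
    simp only [Set.mem_singleton_iff] at hy
    subst hy
    rw [hbeq]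
    exact mem_iUnion.mpr ⟨2, seg_step d hd hodd x hx.1 hx.2⟩
  · rw [hbeq]
    exact isOpen_iUnion hopenS
  · rw [hbeq]
    rw [simply_connected_iff_paths_homotopic']
    constructor
    · rw [← isPathConnected_iff_pathConnectedSpace]
      refine ⟨((0:ℝ),(0:ℝ)), mem_iUnion.mpr ⟨0, by rw [hS0]; exact h0B⟩, ?_⟩
      intro y hy
      obtain ⟨n, hn⟩ := mem_iUnion.mp hy
      have h0n : ((0:ℝ),(0:ℝ)) ∈ S n := by
        have h00 : ((0:ℝ),(0:ℝ)) ∈ S 0 := by rw [hS0]; exact h0B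
        exact hmono' (Nat.zero_le n) h00
      exact ((hpc n).joinedIn _ h0n _ hn).mono (subset_iUnion S n)
    · intro x y γ₁ γ₂
      have hK1 : IsCompact (range (fun t => ((γ₁ t : ℝ × ℝ)))) :=
        isCompact_range (continuous_subtype_val.comp γ₁.continuous)
      have hK2 : IsCompact (range (fun t => ((γ₂ t : ℝ × ℝ)))) :=
        isCompact_range (continuous_subtype_val.comp γ₂.continuous)
      have hKsub : (range (fun t => ((γ₁ t : ℝ × ℝ))) ∪ range fun t => ((γ₂ t : ℝ × ℝ)))
          ⊆ ⋃ n, S n := by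
        rintro q (⟨t, rfl⟩ | ⟨t, rfl⟩)
        exacts [(γ₁ t).2, (γ₂ t).2]
      obtain ⟨n, hn⟩ :=
        (hK1.union hK2).elim_directed_cover S hopenS hKsub (hmono'.directed_le)
      have h1 : ∀ t, (γ₁ t : ℝ × ℝ) ∈ S n := fun t => hn (Or.inl ⟨t, rfl⟩)
      have h2 : ∀ t, (γ₂ t : ℝ × ℝ) ∈ S n := fun t => hn (Or.inr ⟨t, rfl⟩)
      have hx : (x : ℝ × ℝ) ∈ S n := by
        have := h1 0
        rwa [γ₁.source] at this
      have hy : (y : ℝ × ℝ) ∈ S n := by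
        have := h1 1
        rwa [γ₁.target] at this
      haveI := hsc n
      have hsubA : S n ⊆ ⋃ m, S m := subset_iUnion S n
      set f : C(↥(S n), ↥(⋃ m, S m)) :=
        ⟨Set.inclusion hsubA, continuous_inclusion hsubA⟩ with hf
      have hhom :=
        (SimplyConnectedSpace.paths_homotopic (pathInto γ₁ h1 hx hy) (pathInto γ₂ h2 hx hy)).map f
      have e1 : (pathInto γ₁ h1 hx hy).map f.continuous = γ₁ := by
        ext t <;> rfl
      have e2 : (pathInto γ₂ h2 hx hy).map f.continuous = γ₂ := by
        ext t <;> rfl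
      rw [e1, e2] at hhom
      exact hhom
end

section
/- Let d ≥ 3 be odd and T_d := T_{1,d}. For b ∈ (0, 1/2], let Q_b ⊂ ℝ² be the convex hull of the six points (2b^d, 0), (2b^d, 2b^d), (0, 2b^d), (−b^d, 0), (−b^d, −b^d), (0, −b^d). Then for every b ∈ (0, 1/2], T_d(Q_b) is contained in the topological interior of Q_b. -/
/-- The hexagon `Q_b`: convex hull of the six indicated vertices. -/
noncomputable def Qb (d : ℕ) (b : ℝ) : Set (ℝ × ℝ) :=
  convexHull ℝ
    {((2 * b ^ d, (0 : ℝ))),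
     ((2 * b ^ d, 2 * b ^ d)),
     (((0 : ℝ), 2 * b ^ d)),
     ((-b ^ d, (0 : ℝ))),
     ((-b ^ d, -b ^ d)),
     (((0 : ℝ), -b ^ d))}

private lemma combo3 {S : Set (ℝ × ℝ)} {v₁ v₂ v₃ : ℝ × ℝ}
    (h1 : v₁ ∈ S) (h2 : v₂ ∈ S) (h3 : v₃ ∈ S)
    {a b c : ℝ} (ha : 0 ≤ a) (hb : 0 ≤ b) (hc : 0 ≤ c) (hs : a + b + c = 1) :
    a • v₁ + b • v₂ + c • v₃ ∈ convexHull ℝ S := by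
  have key := (convex_convexHull ℝ S).sum_mem (t := (Finset.univ : Finset (Fin 3)))
      (w := ![a, b, c]) (z := ![v₁, v₂, v₃])
      (fun i _ => by fin_cases i <;> simpa)
      (by simp [Fin.sum_univ_three, hs])
      (fun i _ => by
        fin_cases i
        · simpa using subset_convexHull ℝ S h1
        · simpa using subset_convexHull ℝ S h2
        · simpa using subset_convexHull ℝ S h3)
  simpa [Fin.sum_univ_three] using key

/-- every point of the polygonal region is in the hexagonal hull -/
private lemma mem_hex {c x y : ℝ} (hc : 0 < c)
    (h1 : x ≤ 2*c) (h2 : y ≤ 2*c) (h3 : -c ≤ x) (h4 : -c ≤ y)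
    (h5 : y - 2*x ≤ 2*c) (h6 : x - 2*y ≤ 2*c) :
    ((x, y) : ℝ × ℝ) ∈ convexHull ℝ
      ({(2*c, 0), (2*c, 2*c), (0, 2*c), (-c, 0), (-c, -c), (0, -c)} : Set (ℝ × ℝ)) := by
  have hc' : c ≠ 0 := ne_of_gt hc
  rcases le_or_gt x 0 with hx | hx
  · rcases le_or_gt (x + y) (-c) with hxy | hxy
    · -- triangle D E F
      have key : ((x, y) : ℝ × ℝ)
          = ((y + c)/c) • ((-c, 0) : ℝ × ℝ) + ((-x - y - c)/c) • ((-c, -c) : ℝ × ℝ)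
            + ((x + c)/c) • ((0, -c) : ℝ × ℝ) := by
        simp only [Prod.smul_mk, smul_eq_mul, Prod.mk_add_mk, Prod.mk.injEq]
        constructor <;> field_simp <;> ring
      rw [key]
      exact combo3 (by simp) (by simp) (by simp)
        (div_nonneg (by linarith) hc.le) (div_nonneg (by linarith) hc.le)
        (div_nonneg (by linarith) hc.le) (by field_simp; try ring)
    · -- triangle C D F
      have key : ((x, y) : ℝ × ℝ)
          = ((x + y + c)/(3*c)) • ((0, 2*c) : ℝ × ℝ) + ((-x)/c) • ((-c, 0) : ℝ × ℝ)
            + ((2*c + 2*x - y)/(3*c)) • ((0, -c) : ℝ × ℝ) := by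
        simp only [Prod.smul_mk, smul_eq_mul, Prod.mk_add_mk, Prod.mk.injEq]
        constructor <;> field_simp <;> ring
      rw [key]
      exact combo3 (by simp) (by simp) (by simp)
        (div_nonneg (by linarith) (by linarith)) (div_nonneg (by linarith) hc.le)
        (div_nonneg (by linarith) (by linarith)) (by field_simp; try ring)
  · rcases le_or_gt y 0 with hy | hy
    · -- triangle A D F
      have key : ((x, y) : ℝ × ℝ)
          = ((x + y + c)/(3*c)) • ((2*c, 0) : ℝ × ℝ) + ((2*c - x + 2*y)/(3*c)) • ((-c, 0) : ℝ × ℝ)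
            + ((-y)/c) • ((0, -c) : ℝ × ℝ) := by
        simp only [Prod.smul_mk, smul_eq_mul, Prod.mk_add_mk, Prod.mk.injEq]
        constructor <;> field_simp <;> ring
      rw [key]
      exact combo3 (by simp) (by simp) (by simp)
        (div_nonneg (by linarith) (by linarith)) (div_nonneg (by linarith) (by linarith))
        (div_nonneg (by linarith) hc.le) (by field_simp; try ring)
    · rcases le_or_gt (x + y) (2*c) with hxy | hxy
      · -- triangle A C D
        have key : ((x, y) : ℝ × ℝ)
            = ((2*x - y + 2*c)/(6*c)) • ((2*c, 0) : ℝ × ℝ) + (y/(2*c)) • ((0, 2*c) : ℝ × ℝ)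
              + ((2*c - x - y)/(3*c)) • ((-c, 0) : ℝ × ℝ) := by
          simp only [Prod.smul_mk, smul_eq_mul, Prod.mk_add_mk, Prod.mk.injEq]
          constructor <;> field_simp <;> ring
        rw [key]
        exact combo3 (by simp) (by simp) (by simp)
          (div_nonneg (by linarith) (by linarith)) (div_nonneg (by linarith) (by linarith))
          (div_nonneg (by linarith) (by linarith)) (by field_simp; try ring)
      · -- triangle A B C
        have key : ((x, y) : ℝ × ℝ)
            = ((2*c - y)/(2*c)) • ((2*c, 0) : ℝ × ℝ) + ((x + y - 2*c)/(2*c)) • ((2*c, 2*c) : ℝ × ℝ)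
              + ((2*c - x)/(2*c)) • ((0, 2*c) : ℝ × ℝ) := by
          simp only [Prod.smul_mk, smul_eq_mul, Prod.mk_add_mk, Prod.mk.injEq]
          constructor <;> field_simp <;> ring
        rw [key]
        exact combo3 (by simp) (by simp) (by simp)
          (div_nonneg (by linarith) (by linarith)) (div_nonneg (by linarith) (by linarith))
          (div_nonneg (by linarith) (by linarith)) (by field_simp; try ring)

/-- the hexagonal hull is inside the polygonal region -/
private lemma Qb_subset_P (d : ℕ) (b : ℝ) (hc : (0:ℝ) ≤ b ^ d) :
    Qb d b ⊆ {p : ℝ × ℝ | p.1 ≤ 2*b^d ∧ p.2 ≤ 2*b^d ∧ -b^d ≤ p.1 ∧ -b^d ≤ p.2 ∧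
      p.2 - 2*p.1 ≤ 2*b^d ∧ p.1 - 2*p.2 ≤ 2*b^d} := by
  apply convexHull_min
  · intro v hv
    simp only [Set.mem_insert_iff, Set.mem_singleton_iff] at hv
    rcases hv with rfl|rfl|rfl|rfl|rfl|rfl <;>
      exact ⟨by simp <;> linarith, by simp <;> linarith, by simp <;> linarith,
        by simp <;> linarith, by simp <;> linarith, by simp <;> linarith⟩
  · have l1 : IsLinearMap ℝ (fun p : ℝ × ℝ => p.1) := ⟨fun _ _ => rfl, fun _ _ => rfl⟩
    have l2 : IsLinearMap ℝ (fun p : ℝ × ℝ => p.2) := ⟨fun _ _ => rfl, fun _ _ => rfl⟩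
    have l5 : IsLinearMap ℝ (fun p : ℝ × ℝ => p.2 - 2*p.1) := by
      constructor
      · intro p q; simp only [Prod.fst_add, Prod.snd_add]; ring
      · intro r p; simp only [Prod.smul_fst, Prod.smul_snd, smul_eq_mul]; ring
    have l6 : IsLinearMap ℝ (fun p : ℝ × ℝ => p.1 - 2*p.2) := by
      constructor
      · intro p q; simp only [Prod.fst_add, Prod.snd_add]; ring
      · intro r p; simp only [Prod.smul_fst, Prod.smul_snd, smul_eq_mul]; ring
    exact (convex_halfSpace_le l1 _).inter ((convex_halfSpace_le l2 _).inter
      ((convex_halfSpace_ge l1 _).inter ((convex_halfSpace_ge l2 _).inter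
      ((convex_halfSpace_le l5 _).inter (convex_halfSpace_le l6 _)))))

/-- for odd `d ≥ 3` and every `b ∈ (0, 1/2]`, the image
`T_d(Q_b)` is contained in the interior of `Q_b`. -/
theorem stmt11 (d : ℕ) (hd : 3 ≤ d) (hodd : Odd d) :
    ∀ b ∈ Set.Ioc (0 : ℝ) (1 / 2),
      Tmap 1 d '' Qb d b ⊆ interior (Qb d b) := by
  intro b hb
  obtain ⟨hb0, hb2⟩ := hb
  have hc : (0:ℝ) < b ^ d := pow_pos hb0 d
  have hc8 : b ^ d ≤ 1/8 := by
    calc b ^ d ≤ (1/2:ℝ) ^ d := pow_le_pow_left₀ hb0.le hb2 d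
    _ ≤ (1/2:ℝ) ^ 3 := pow_le_pow_of_le_one (by norm_num) (by norm_num) hd
    _ = 1/8 := by norm_num
  have h4c : (4 * b ^ d) ^ (d-1) ≤ (1/4 : ℝ) := by
    calc (4 * b ^ d) ^ (d-1) ≤ (1/2:ℝ) ^ (d-1) :=
          pow_le_pow_left₀ (by positivity) (by linarith) _
    _ ≤ (1/2:ℝ) ^ 2 := pow_le_pow_of_le_one (by norm_num) (by norm_num) (by omega)
    _ = 1/4 := by norm_num
  have h2c : (2 * b ^ d) ^ (d-1) ≤ (1/16 : ℝ) := by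
    calc (2 * b ^ d) ^ (d-1) ≤ (1/4:ℝ) ^ (d-1) :=
          pow_le_pow_left₀ (by positivity) (by linarith) _
    _ ≤ (1/4:ℝ) ^ 2 := pow_le_pow_of_le_one (by norm_num) (by norm_num) (by omega)
    _ = 1/16 := by norm_num
  -- the strict region is open and inside Qb, hence inside the interior
  have hopen : IsOpen {p : ℝ × ℝ | p.1 < 2*b^d ∧ p.2 < 2*b^d ∧ -b^d < p.1 ∧ -b^d < p.2 ∧
      p.2 - 2*p.1 < 2*b^d ∧ p.1 - 2*p.2 < 2*b^d} := by
    have c1 : Continuous (fun p : ℝ × ℝ => p.1) := continuous_fst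
    have c2 : Continuous (fun p : ℝ × ℝ => p.2) := continuous_snd
    have c5 : Continuous (fun p : ℝ × ℝ => p.2 - 2*p.1) := by fun_prop
    have c6 : Continuous (fun p : ℝ × ℝ => p.1 - 2*p.2) := by fun_prop
    exact (isOpen_lt c1 continuous_const).inter
      ((isOpen_lt c2 continuous_const).inter
      ((isOpen_lt continuous_const c1).inter
      ((isOpen_lt continuous_const c2).inter
      ((isOpen_lt c5 continuous_const).inter
      (isOpen_lt c6 continuous_const)))))
  have hsubQ : {p : ℝ × ℝ | p.1 < 2*b^d ∧ p.2 < 2*b^d ∧ -b^d < p.1 ∧ -b^d < p.2 ∧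
      p.2 - 2*p.1 < 2*b^d ∧ p.1 - 2*p.2 < 2*b^d} ⊆ Qb d b := by
    rintro p ⟨a1, a2, a3, a4, a5, a6⟩
    have := mem_hex hc a1.le a2.le a3.le a4.le a5.le a6.le
    rw [Prod.mk.eta] at this
    exact this
  have hint := interior_maximal hsubQ hopen
  rintro q ⟨p, hp, rfl⟩
  obtain ⟨x, y⟩ := p
  have hP := Qb_subset_P d b hc.le hp
  simp only [Set.mem_setOf_eq] at hP
  obtain ⟨h1, h2, h3, h4, h5, h6⟩ := hP
  apply hint
  simp only [Tmap, Set.mem_setOf_eq, one_mul, mul_one]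
  have hh : (x+y)^d = (x+y)^(d-1) * (x+y) := by
    rw [← pow_succ]; congr 1; omega
  rcases lt_trichotomy (x + y) 0 with hs | hs | hs
  · -- s < 0
    have heven : Even (d-1) := Nat.Odd.sub_odd hodd odd_one
    have habs : (x+y)^(d-1) ≤ (2*b^d)^(d-1) := by
      have hrw : (x+y)^(d-1) = (-(x+y))^(d-1) := (heven.neg_pow _).symm
      rw [hrw]
      exact pow_le_pow_left₀ (by linarith) (by linarith) _
    have hu_lb : (1/16) * (x+y) ≤ (x+y)^d := by
      rw [hh]
      exact mul_le_mul_of_nonpos_right (le_trans habs h2c) hs.le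
    have hu_neg : (x+y)^d < 0 := hodd.pow_neg hs
    refine ⟨by linarith, by linarith, by linarith, by linarith, by linarith, by linarith⟩
  · -- s = 0
    have hu : (x+y)^d = 0 := by rw [hs]; exact zero_pow (by omega)
    refine ⟨by linarith, by linarith, by linarith, by linarith, by linarith, by linarith⟩
  · -- s > 0
    have hsd : (x+y)^(d-1) ≤ (4*b^d)^(d-1) := pow_le_pow_left₀ hs.le (by linarith) _
    have hu4 : (x+y)^d ≤ (1/4) * (x+y) := by
      rw [hh]
      exact mul_le_mul_of_nonneg_right (le_trans hsd h4c) hs.le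
    have hu0 : 0 < (x+y)^d := pow_pos hs d
    refine ⟨by linarith, by linarith, by linarith, ?_, by linarith, by linarith⟩
    rcases le_or_gt (x+y) (2*b^d) with hs2 | hs2
    · have hsd2 : (x+y)^(d-1) ≤ (2*b^d)^(d-1) := pow_le_pow_left₀ hs.le (by linarith) _
      have hu16 : (x+y)^d ≤ (1/16) * (x+y) := by
        rw [hh]
        exact mul_le_mul_of_nonneg_right (le_trans hsd2 h2c) hs.le
      linarith
    · linarith
end

section
/- Let d ≥ 3 be odd and T_d := T_{1,d}. Then the points p₀ = (0,1) and p₁ = (0,−1) form a two-cycle of T_d, i.e. T_d(p₀) = p₁ and T_d(p₁) = p₀. The derivative of T_d² at p₀ (and also at p₁) equals the matrix M = [[3d² − 2d, 3d² − 4d + 1], [6d² − 2d, 6d² − 6d + 1]], and the eigenvalues of M are λ± = (9d² − 8d + 1 ± (3d−1)·√(9d² − 10d + 1))/2, which satisfy 1/9 < λ⁻ < 1 < λ⁺; hence the two-cycle {p₀, p₁} is a hyperbolic saddle. -/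
set_option maxHeartbeats 1000000


/-- The matrix `M = DT_d²(p₀) = [[3d²−2d, 3d²−4d+1],[6d²−2d, 6d²−6d+1]]`. -/
noncomputable def Mmat (d : ℕ) : Matrix (Fin 2) (Fin 2) ℝ :=
  !![3 * (d : ℝ) ^ 2 - 2 * d, 3 * (d : ℝ) ^ 2 - 4 * d + 1;
     6 * (d : ℝ) ^ 2 - 2 * d, 6 * (d : ℝ) ^ 2 - 6 * d + 1]

/-- The continuous linear map on `ℝ²` with matrix `Mmat d`. -/
noncomputable def Dcycle (d : ℕ) : ℝ × ℝ →L[ℝ] ℝ × ℝ :=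
  ((3 * (d : ℝ) ^ 2 - 2 * d) • ContinuousLinearMap.fst ℝ ℝ ℝ +
    (3 * (d : ℝ) ^ 2 - 4 * d + 1) • ContinuousLinearMap.snd ℝ ℝ ℝ).prod
  ((6 * (d : ℝ) ^ 2 - 2 * d) • ContinuousLinearMap.fst ℝ ℝ ℝ +
    (6 * (d : ℝ) ^ 2 - 6 * d + 1) • ContinuousLinearMap.snd ℝ ℝ ℝ)

/-- `λ⁻` and `λ⁺`, the eigenvalues of `Mmat d`. -/
noncomputable def lamMinus (d : ℕ) : ℝ :=
  (9 * (d : ℝ) ^ 2 - 8 * d + 1 - (3 * d - 1) * Real.sqrt (9 * (d : ℝ) ^ 2 - 10 * d + 1)) / 2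

noncomputable def lamPlus (d : ℕ) : ℝ :=
  (9 * (d : ℝ) ^ 2 - 8 * d + 1 + (3 * d - 1) * Real.sqrt (9 * (d : ℝ) ^ 2 - 10 * d + 1)) / 2

/-- The differential of `Tmap 1 d` at a point with coordinate sum `s`,
written with coefficient `c = d * s^(d-1)`. -/
noncomputable def DT (c : ℝ) : ℝ × ℝ →L[ℝ] ℝ × ℝ :=
  ((-c) • ContinuousLinearMap.fst ℝ ℝ ℝ + (1 - c) • ContinuousLinearMap.snd ℝ ℝ ℝ).prod
  ((-(2 * c)) • ContinuousLinearMap.fst ℝ ℝ ℝ + (1 - 2 * c) • ContinuousLinearMap.snd ℝ ℝ ℝ)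

lemma Tmap_deriv (d : ℕ) (p : ℝ × ℝ) :
    HasFDerivAt (Tmap 1 d) (DT ((d : ℝ) * (p.1 + p.2) ^ (d - 1))) p := by
  set c : ℝ := (d : ℝ) * (p.1 + p.2) ^ (d - 1) with hc
  have hsum : HasFDerivAt (fun q : ℝ × ℝ => q.1 + q.2)
      (ContinuousLinearMap.fst ℝ ℝ ℝ + ContinuousLinearMap.snd ℝ ℝ ℝ) p :=
    hasFDerivAt_fst.add hasFDerivAt_snd
  have hpowd : HasDerivAt (fun t : ℝ => t ^ d) c (p.1 + p.2) := by
    simpa [hc, mul_comm] using hasDerivAt_pow d (p.1 + p.2)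
  have hpow : HasFDerivAt (fun q : ℝ × ℝ => (q.1 + q.2) ^ d)
      (c • (ContinuousLinearMap.fst ℝ ℝ ℝ + ContinuousLinearMap.snd ℝ ℝ ℝ)) p :=
    hpowd.comp_hasFDerivAt p hsum
  have h1 : HasFDerivAt (fun q : ℝ × ℝ => q.2 - 1 * (q.1 + q.2) ^ d)
      (ContinuousLinearMap.snd ℝ ℝ ℝ -
        (1 : ℝ) • (c • (ContinuousLinearMap.fst ℝ ℝ ℝ + ContinuousLinearMap.snd ℝ ℝ ℝ))) p :=
    hasFDerivAt_snd.sub (hpow.const_mul 1)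
  have h2 : HasFDerivAt (fun q : ℝ × ℝ => q.2 - 2 * 1 * (q.1 + q.2) ^ d)
      (ContinuousLinearMap.snd ℝ ℝ ℝ -
        (2 * 1 : ℝ) • (c • (ContinuousLinearMap.fst ℝ ℝ ℝ + ContinuousLinearMap.snd ℝ ℝ ℝ))) p :=
    hasFDerivAt_snd.sub (hpow.const_mul (2 * 1))
  have h := h1.prodMk h2
  have heq : (ContinuousLinearMap.snd ℝ ℝ ℝ -
        (1 : ℝ) • (c • (ContinuousLinearMap.fst ℝ ℝ ℝ + ContinuousLinearMap.snd ℝ ℝ ℝ))).prod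
      (ContinuousLinearMap.snd ℝ ℝ ℝ -
        (2 * 1 : ℝ) • (c • (ContinuousLinearMap.fst ℝ ℝ ℝ + ContinuousLinearMap.snd ℝ ℝ ℝ)))
      = DT c := by
    apply ContinuousLinearMap.ext
    intro q
    simp [DT, ContinuousLinearMap.prod_apply, Prod.ext_iff]
    constructor <;> ring
  rw [heq] at h
  exact h

/-- `{(0,1),(0,−1)}` is a two-cycle of `T_d`, the derivative of
`T_d²` at each of its points is the matrix `M`, whose eigenvalues `λ±` satisfy
`1/9 < λ⁻ < 1 < λ⁺` (a hyperbolic saddle). -/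
theorem stmt12 (d : ℕ) (hd : 3 ≤ d) (hodd : Odd d) :
    Tmap 1 d (0, 1) = (0, -1) ∧
    Tmap 1 d (0, -1) = (0, 1) ∧
    HasFDerivAt (Tmap 1 d ∘ Tmap 1 d) (Dcycle d) (0, 1) ∧
    HasFDerivAt (Tmap 1 d ∘ Tmap 1 d) (Dcycle d) (0, -1) ∧
    Module.End.HasEigenvalue (Matrix.toLin' (Mmat d)) (lamMinus d) ∧
    Module.End.HasEigenvalue (Matrix.toLin' (Mmat d)) (lamPlus d) ∧
    1 / 9 < lamMinus d ∧ lamMinus d < 1 ∧ 1 < lamPlus d := by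
  have hdn : (3 : ℝ) ≤ (d : ℝ) := by exact_mod_cast hd
  have hne : (-1 : ℝ) ^ d = -1 := hodd.neg_one_pow
  have heven : Even (d - 1) := Nat.Odd.sub_odd hodd odd_one
  have hne1 : (-1 : ℝ) ^ (d - 1) = 1 := heven.neg_one_pow
  have hT1 : Tmap 1 d (0, 1) = (0, -1) := by
    simp [Tmap]; norm_num
  have hT2 : Tmap 1 d (0, -1) = (0, 1) := by
    simp [Tmap, hne]; norm_num
  -- derivatives
  have hD1 : HasFDerivAt (Tmap 1 d) (DT d) (0, 1) := by
    have := Tmap_deriv d (0, 1)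
    simpa using this
  have hD2 : HasFDerivAt (Tmap 1 d) (DT d) (0, -1) := by
    have := Tmap_deriv d (0, -1)
    simpa [hne1] using this
  have hcomp : (DT d).comp (DT d) = Dcycle d := by
    apply ContinuousLinearMap.ext
    intro q
    simp [DT, Dcycle, ContinuousLinearMap.prod_apply, Prod.ext_iff]
    constructor <;> ring
  have hC1 : HasFDerivAt (Tmap 1 d ∘ Tmap 1 d) (Dcycle d) (0, 1) := by
    rw [← hcomp]
    exact (hT1 ▸ hD2 : HasFDerivAt (Tmap 1 d) (DT d) (Tmap 1 d (0, 1))).comp (0, 1) hD1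
  have hC2 : HasFDerivAt (Tmap 1 d ∘ Tmap 1 d) (Dcycle d) (0, -1) := by
    rw [← hcomp]
    exact (hT2 ▸ hD1 : HasFDerivAt (Tmap 1 d) (DT d) (Tmap 1 d (0, -1))).comp (0, -1) hD2
  -- eigenvalues
  have hDisc : (0 : ℝ) ≤ 9 * (d : ℝ) ^ 2 - 10 * d + 1 := by nlinarith
  set s : ℝ := Real.sqrt (9 * (d : ℝ) ^ 2 - 10 * d + 1) with hsdef
  have hs : s ^ 2 = 9 * (d : ℝ) ^ 2 - 10 * d + 1 := Real.sq_sqrt hDisc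
  have hsnn : 0 ≤ s := Real.sqrt_nonneg _
  have hb : (0 : ℝ) < 3 * (d : ℝ) ^ 2 - 4 * d + 1 := by nlinarith
  have heig : ∀ lam : ℝ,
      lam ^ 2 - (9 * (d : ℝ) ^ 2 - 8 * d + 1) * lam + (d : ℝ) ^ 2 = 0 →
      Module.End.HasEigenvalue (Matrix.toLin' (Mmat d)) lam := by
    intro lam hchar
    apply Module.End.hasEigenvalue_of_hasEigenvector
      (x := ![3 * (d : ℝ) ^ 2 - 4 * d + 1, lam - (3 * (d : ℝ) ^ 2 - 2 * d)])
    constructor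
    · rw [Module.End.mem_eigenspace_iff, Matrix.toLin'_apply]
      funext i
      fin_cases i <;>
        simp [Mmat, Matrix.mulVec, dotProduct] <;> nlinarith [hchar]
    · intro h
      have := congrFun h 0
      simp at this
      nlinarith
  have hcharm : (lamMinus d) ^ 2 - (9 * (d : ℝ) ^ 2 - 8 * d + 1) * (lamMinus d)
      + (d : ℝ) ^ 2 = 0 := by
    rw [lamMinus, ← hsdef]
    linear_combination ((3 * (d:ℝ) - 1) ^ 2 / 4) * hs
  have hcharp : (lamPlus d) ^ 2 - (9 * (d : ℝ) ^ 2 - 8 * d + 1) * (lamPlus d)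
      + (d : ℝ) ^ 2 = 0 := by
    rw [lamPlus, ← hsdef]
    linear_combination ((3 * (d:ℝ) - 1) ^ 2 / 4) * hs
  -- inequalities
  have hgt : 1 < lamPlus d := by
    rw [lamPlus, ← hsdef]
    nlinarith [mul_nonneg (by nlinarith : (0:ℝ) ≤ 3 * (d:ℝ) - 1) hsnn]
  have hlt : lamMinus d < 1 := by
    have key : 9 * (d : ℝ) ^ 2 - 8 * d + 1 - 2 < (3 * (d : ℝ) - 1) * s := by
      apply lt_of_pow_lt_pow_left₀ 2 (mul_nonneg (by nlinarith) hsnn)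
      nlinarith [hs]
    rw [lamMinus, ← hsdef]
    nlinarith [key]
  have hgt9 : 1 / 9 < lamMinus d := by
    have key : (3 * (d : ℝ) - 1) * s < 9 * (d : ℝ) ^ 2 - 8 * d + 1 - 2 / 9 := by
      apply lt_of_pow_lt_pow_left₀ 2 (by nlinarith)
      nlinarith [hs, mul_nonneg (by nlinarith : (0:ℝ) ≤ 3 * (d:ℝ) - 1) hsnn]
    rw [lamMinus, ← hsdef]
    nlinarith [key]
  exact ⟨hT1, hT2, hC1, hC2, heig _ hcharm, heig _ hcharp, hgt9, hlt, hgt⟩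
end

section
/- Let d ≥ 3 be odd and let T_d(x,y) = (y + (x+y)^d, y + 2(x+y)^d) (i.e. T_{a,d} with a = −1). Let Q₄ = {(x,y) ∈ ℝ² : x ≥ 0, y ≤ 0} be the closed fourth quadrant. If (x₀,y₀) ∈ ℝ² is such that (x₂,y₂) := T_d²(x₀,y₀) ∈ Q₄, then x₂ ≤ x₀/2. -/
/-- for odd `d ≥ 3` and the map with `a = −1`, if the second
iterate of `(x₀,y₀)` lies in the closed fourth quadrant `Q₄`, then its first
coordinate is at most `x₀/2`. -/
theorem stmt18 (d : ℕ) (hd : 3 ≤ d) (hodd : Odd d) (p : ℝ × ℝ)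
    (h : 0 ≤ ((Tmap (-1) d)^[2] p).1 ∧ ((Tmap (-1) d)^[2] p).2 ≤ 0) :
    ((Tmap (-1) d)^[2] p).1 ≤ p.1 / 2 := by
  obtain ⟨h1, h2⟩ := h
  simp only [Function.iterate_succ, Function.iterate_zero, Function.comp_apply, id_eq,
    Tmap] at h1 h2 ⊢
  set s : ℝ := p.1 + p.2 with hs
  set s1 : ℝ := p.2 - -1 * s ^ d + (p.2 - 2 * -1 * s ^ d) with hs1
  have hs1d : s1 ^ d ≤ 0 := by linarith
  have hs10 : s1 ≤ 0 := (Odd.pow_nonpos_iff hodd).mp hs1d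
  have hsd : (0:ℝ) ≤ s ^ d := by linarith
  have hs0 : (0:ℝ) ≤ s := (Odd.pow_nonneg_iff hodd).mp hsd
  linarith
end
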